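/- arXiv:2203.00248 — 7 statements merged into one kernel-verified Lean document; each statement's English description precedes it below -/
import Mathlib

section
/- Let l, k, m be integers with m ≥ 2k > 2l ≥ 0. Let h(x) = ∑_{j=0}^{m} b_j x^j ∈ ℤ[x] with b_0·b_m ≠ 0, and let p be a prime such that p ∤ b_m, p | b_j for all 0 ≤ j ≤ m−l−1, and for every j with 1 ≤ j ≤ m and b_j ≠ 0 one has k·(ν_p(b_0) − ν_p(b_j)) < j (equivalently, the rightmost edge of the Newton polygon of h with respect to p has slope < 1/k). Then for any integers a_0, a_1, …, a_m with p ∤ a_0·a_m, the polynomial f(x) = ∑_{j=0}^{m} a_j b_j x^j has no factor in ℚ[x] of degree d with l+1 ≤ d ≤ k. -/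
open Polynomial Finset



section GammaHelpers

variable {Γ₀ : Type*} [LinearOrderedCommGroupWithZero Γ₀]

lemma my_pow_anti {π : Γ₀} (h0 : π ≠ 0) (h1 : π < 1) {s t : ℕ} (h : s < t) :
    π ^ t < π ^ s := by
  have he : π ^ t = π ^ s * π ^ (t - s) := by rw [← pow_add]; congr 1; omega
  rw [he]
  have h2 : π ^ (t - s) < 1 := pow_lt_one' h1 (by omega)
  have := mul_lt_mul_of_le_of_lt_of_nonneg_of_pos (le_refl (π ^ s)) h2 zero_le' (zero_lt_iff.mpr (pow_ne_zero _ h0))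
  simpa using this

lemma my_lt_of_pow_lt_pow {x y : Γ₀} {n : ℕ} (h : x ^ n < y ^ n) : x < y :=
  lt_of_not_ge fun hle => absurd (pow_le_pow_left' hle n) (not_le.mpr h)

lemma my_multiset_prod {π : Γ₀} {k : ℕ} :
    ∀ (S : Multiset Γ₀), (∀ x ∈ S, π < x ^ k) → π ^ (Multiset.card S) ≤ S.prod ^ k := by
  intro S
  induction S using Multiset.induction_on with
  | empty => intro _; simp
  | cons x S ih =>
    intro h
    have hx : π < x ^ k := h x (Multiset.mem_cons_self x S)
    have hS : π ^ (Multiset.card S) ≤ S.prod ^ k := ih fun y hy => h y (Multiset.mem_cons_of_mem hy)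
    rw [Multiset.card_cons, Multiset.prod_cons, mul_pow, pow_succ]
    calc π ^ Multiset.card S * π ≤ S.prod ^ k * x ^ k := mul_le_mul' hS hx.le
      _ = x ^ k * S.prod ^ k := mul_comm _ _

lemma my_multiset_prod_strict {π : Γ₀} {k : ℕ} (h0 : π ≠ 0)
    (S : Multiset Γ₀) (hS : ∀ x ∈ S, π < x ^ k) (hcard : S ≠ 0) :
    π ^ (Multiset.card S) < S.prod ^ k := by
  obtain ⟨x, hxS⟩ := Multiset.exists_mem_of_ne_zero hcard
  obtain ⟨T, rfl⟩ := Multiset.exists_cons_of_mem hxS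
  have hx : π < x ^ k := hS x (Multiset.mem_cons_self x T)
  have hT : π ^ (Multiset.card T) ≤ T.prod ^ k :=
    my_multiset_prod T fun y hy => hS y (Multiset.mem_cons_of_mem hy)
  have hT0 : T.prod ^ k ≠ 0 := by
    intro hz
    rw [hz] at hT
    exact (pow_ne_zero _ h0) (le_zero_iff.mp hT)
  rw [Multiset.card_cons, Multiset.prod_cons, mul_pow, pow_succ]
  have := mul_lt_mul_of_le_of_lt_of_nonneg_of_pos hT hx zero_le' (zero_lt_iff.mpr hT0)
  calc π ^ Multiset.card T * π < T.prod ^ k * x ^ k := this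
    _ = x ^ k * T.prod ^ k := mul_comm _ _

end GammaHelpers


lemma my_exists_valuation (K : Type) [Field K] [CharZero K] {p : ℕ} (hp : p.Prime) :
    ∃ (Γ₀ : Type) (_ : LinearOrderedCommGroupWithZero Γ₀) (v : Valuation K Γ₀),
      v (p : K) < 1 ∧ v (p : K) ≠ 0 ∧ ∀ n : ℤ, ¬ (p : ℤ) ∣ n → v ((n : ℤ) : K) = 1 := by
  set P : Ideal ℤ := Ideal.span {(p : ℤ)} with hP
  haveI hPp : P.IsPrime :=
    (Ideal.span_singleton_prime (by exact_mod_cast hp.ne_zero)).mpr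
      (Nat.prime_iff_prime_int.mp hp)
  have hg : ∀ y : P.primeCompl, IsUnit ((Int.castRingHom K) y) := by
    intro y
    refine isUnit_iff_ne_zero.mpr ?_
    have hy : (y : ℤ) ≠ 0 := by
      intro h
      exact y.prop (by rw [h]; exact P.zero_mem)
    exact_mod_cast Int.cast_ne_zero.mpr hy
  let f : Localization.AtPrime P →+* K := IsLocalization.lift (M := P.primeCompl) hg
  have hf : ∀ n : ℤ, f (algebraMap ℤ (Localization.AtPrime P) n) = (n : K) := by
    intro n
    rw [IsLocalization.lift_eq]
    simp
  obtain ⟨A, hA, hloc⟩ := IsLocalRing.exists_factor_valuationRing f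
  refine ⟨A.ValueGroup, inferInstance, A.valuation, ?_, ?_, ?_⟩
  · -- v p < 1
    have hmem : ((p : ℤ) : K) ∈ A := hf (p : ℤ) ▸ hA _
    have hnu : ¬ IsUnit ((f.codRestrict A.toSubring hA) (algebraMap ℤ _ (p : ℤ))) := by
      intro hu
      have := hloc.1 _ hu
      rw [IsLocalization.AtPrime.isUnit_to_map_iff (Localization.AtPrime P) P] at this
      exact this (Ideal.mem_span_singleton_self _)
    have hmax : ((f.codRestrict A.toSubring hA) (algebraMap ℤ _ (p : ℤ))) ∈
        IsLocalRing.maximalIdeal A := hnu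
    have := (A.valuation_lt_one_iff _).mp hmax
    have hcoe : (((f.codRestrict A.toSubring hA) (algebraMap ℤ _ (p : ℤ))) : K) = ((p : ℤ) : K) := by
      simp [RingHom.codRestrict, hf]
    rw [hcoe] at this
    exact_mod_cast this
  · -- v p ≠ 0
    have hpK : ((p : ℕ) : K) ≠ 0 := Nat.cast_ne_zero.mpr hp.ne_zero
    exact (Valuation.ne_zero_iff A.valuation).mpr hpK
  · -- units
    intro n hn
    have hmemP : n ∈ P.primeCompl := by
      intro hmem
      exact hn (Ideal.mem_span_singleton.mp hmem)
    have hu : IsUnit (algebraMap ℤ (Localization.AtPrime P) n) :=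
      (IsLocalization.AtPrime.isUnit_to_map_iff (Localization.AtPrime P) P n).mpr hmemP
    have hu2 : IsUnit ((f.codRestrict A.toSubring hA) (algebraMap ℤ _ n)) := hu.map _
    have := (A.valuation_eq_one_iff _).mp hu2
    have hcoe : (((f.codRestrict A.toSubring hA) (algebraMap ℤ _ n)) : K) = ((n : ℤ) : K) := by
      simp [RingHom.codRestrict, hf]
    rwa [hcoe] at this


lemma my_gauss (Fz : ℤ[X]) (hFz : Fz ≠ 0) (q : ℚ[X]) (hq : q ∣ Fz.map (Int.castRingHom ℚ)) :
    ∃ g : ℤ[X], g ∣ Fz ∧ g.natDegree = q.natDegree := by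
  have hinj : Function.Injective (Int.castRingHom ℚ) := Int.cast_injective
  have hF0 : Fz.map (Int.castRingHom ℚ) ≠ 0 := (Polynomial.map_ne_zero_iff hinj).mpr hFz
  have hq0 : q ≠ 0 := by rintro rfl; exact hF0 (zero_dvd_iff.mp hq)
  obtain ⟨⟨s, hs0⟩, hs⟩ := IsLocalization.integerNormalization_map_to_map (nonZeroDivisors ℤ) q
  rw [Subtype.coe_mk, Algebra.smul_def, Polynomial.algebraMap_apply] at hs
  set N : ℤ[X] := IsLocalization.integerNormalization (nonZeroDivisors ℤ) q with hNdef
  have hsne : (s : ℚ) ≠ 0 := Int.cast_ne_zero.mpr (nonZeroDivisors.ne_zero hs0)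
  have hN0 : N ≠ 0 := by
    intro h
    apply hq0
    exact (IsFractionRing.integerNormalization_eq_zero_iff (A := ℤ) (K := ℚ)).mp h
  set g : ℤ[X] := N.primPart with hgdef
  have hgprim : g.IsPrimitive := N.isPrimitive_primPart
  have hgN : g ∣ N := N.primPart_dvd
  have halg : algebraMap ℤ ℚ = Int.castRingHom ℚ := rfl
  have hsq : N.map (Int.castRingHom ℚ) = C (s : ℚ) * q := by
    rw [← halg, hs]
    congr 1
  -- map g divides map Fz
  have h1 : g.map (Int.castRingHom ℚ) ∣ Fz.map (Int.castRingHom ℚ) := by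
    have h2 : g.map (Int.castRingHom ℚ) ∣ N.map (Int.castRingHom ℚ) :=
      Polynomial.map_dvd _ hgN
    rw [hsq] at h2
    have h3 : g.map (Int.castRingHom ℚ) ∣ q :=
      ((isUnit_C.mpr (isUnit_iff_ne_zero.mpr hsne)).dvd_mul_left).mp h2
    exact h3.trans hq
  -- transfer to primitive parts
  have hFprim : Fz.primPart.IsPrimitive := Fz.isPrimitive_primPart
  have hcontF : ((Fz.content : ℚ)) ≠ 0 := Int.cast_ne_zero.mpr (by rwa [Ne, Polynomial.content_eq_zero_iff])
  have h4 : g.map (Int.castRingHom ℚ) ∣ Fz.primPart.map (Int.castRingHom ℚ) := by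
    have : Fz.map (Int.castRingHom ℚ) =
        C ((Fz.content : ℚ)) * Fz.primPart.map (Int.castRingHom ℚ) := by
      conv_lhs => rw [Fz.eq_C_content_mul_primPart]
      rw [Polynomial.map_mul, map_C]
      rfl
    rw [this] at h1
    exact ((isUnit_C.mpr (isUnit_iff_ne_zero.mpr hcontF)).dvd_mul_left).mp h1
  have h5 : g ∣ Fz.primPart :=
    (Polynomial.IsPrimitive.Int.dvd_iff_map_cast_dvd_map_cast g Fz.primPart hgprim).mpr h4
  refine ⟨g, h5.trans Fz.primPart_dvd, ?_⟩
  -- degrees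
  have hdeg1 : g.natDegree = N.natDegree := N.natDegree_primPart
  have hdeg2 : N.natDegree = (N.map (Int.castRingHom ℚ)).natDegree :=
    (Polynomial.natDegree_map_eq_of_injective hinj N).symm
  rw [hdeg1, hdeg2, hsq, natDegree_mul (fun h => hsne (by simpa using congrArg (·.coeff 0) h)) hq0,
    natDegree_C, zero_add]


theorem filaseta_newton_polygon_criterion (l k m : ℕ) (p : ℕ) (hp : p.Prime)
    (hm : 2 * k ≤ m) (hkl : l < k)
    (b : ℕ → ℤ) (hb : b 0 * b m ≠ 0)
    (hpbm : ¬ (p : ℤ) ∣ b m)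
    (hpbj : ∀ j, j ≤ m - l - 1 → (p : ℤ) ∣ b j)
    (hslope : ∀ j, 1 ≤ j → j ≤ m → b j ≠ 0 →
      (k : ℤ) * ((padicValInt p (b 0) : ℤ) - (padicValInt p (b j) : ℤ)) < j)
    (a : ℕ → ℤ) (ha : ¬ (p : ℤ) ∣ a 0 * a m) :
    ¬ ∃ q : ℚ[X], q ∣ (∑ j ∈ Finset.range (m + 1),
        Polynomial.C ((a j * b j : ℤ) : ℚ) * Polynomial.X ^ j) ∧
      l + 1 ≤ q.natDegree ∧ q.natDegree ≤ k := by
  rintro ⟨q, hqdvd, hql, hqk⟩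
  haveI : Fact p.Prime := ⟨hp⟩
  have hpZ : Prime (p : ℤ) := Nat.prime_iff_prime_int.mp hp
  have hb0 : b 0 ≠ 0 := left_ne_zero_of_mul hb
  have hbm : b m ≠ 0 := right_ne_zero_of_mul hb
  have ha0 : ¬ (p : ℤ) ∣ a 0 := fun h => ha (h.mul_right _)
  have ham : ¬ (p : ℤ) ∣ a m := fun h => ha (h.mul_left _)
  have ha0' : a 0 ≠ 0 := by rintro h; exact ha0 (h ▸ dvd_zero _)
  have ham' : a m ≠ 0 := by rintro h; exact ham (h ▸ dvd_zero _)
  have hpam_bm : ¬ (p : ℤ) ∣ a m * b m := by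
    intro h
    rcases hpZ.2.2 _ _ h with h' | h'
    · exact ham h'
    · exact hpbm h'
  set Fz : ℤ[X] := ∑ j ∈ Finset.range (m + 1), C (a j * b j) * X ^ j with hFzdef
  have hFzcoeff : ∀ i, Fz.coeff i = if i ∈ Finset.range (m + 1) then a i * b i else 0 := by
    intro i
    rw [hFzdef, finset_sum_coeff]
    simp only [coeff_C_mul, coeff_X_pow, mul_ite, mul_one, mul_zero]
    exact Finset.sum_ite_eq (Finset.range (m + 1)) i (fun j => a j * b j)
  have hFm : Fz.coeff m = a m * b m := by
    rw [hFzcoeff]; simp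
  have hFmne : Fz.coeff m ≠ 0 := by rw [hFm]; exact mul_ne_zero ham' hbm
  have hdegle : Fz.natDegree ≤ m := by
    rw [natDegree_le_iff_coeff_eq_zero]
    intro i hi
    rw [hFzcoeff]
    simp [Finset.mem_range]
    omega
  have hdeg : Fz.natDegree = m := le_antisymm hdegle (le_natDegree_of_ne_zero hFmne)
  have hFz0 : Fz ≠ 0 := fun h => hFmne (by rw [h, coeff_zero])
  have hlead : Fz.leadingCoeff = a m * b m := by rw [leadingCoeff, hdeg, hFm]
  have hF00 : Fz.eval 0 = a 0 * b 0 := by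
    rw [← coeff_zero_eq_eval_zero, hFzcoeff]; simp
  -- express the statement polynomial as a map of Fz
  have hFmapeq : (∑ j ∈ Finset.range (m + 1),
      Polynomial.C ((a j * b j : ℤ) : ℚ) * Polynomial.X ^ j) = Fz.map (Int.castRingHom ℚ) := by
    rw [hFzdef, Polynomial.map_sum]
    refine Finset.sum_congr rfl fun j _ => ?_
    rw [Polynomial.map_mul, Polynomial.map_pow, map_C, map_X]
    rfl
  rw [hFmapeq] at hqdvd
  obtain ⟨g, hgFz, hgdeg⟩ := my_gauss Fz hFz0 q hqdvd
  set d := g.natDegree with hd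
  have hdl : l + 1 ≤ d := hgdeg ▸ hql
  have hdk : d ≤ k := hgdeg ▸ hqk
  have hk1 : 1 ≤ k := by omega
  obtain ⟨r, hr⟩ := hgFz
  have hg0 : g ≠ 0 := fun h => hFz0 (by rw [hr, h, zero_mul])
  have hr0 : r ≠ 0 := fun h => hFz0 (by rw [hr, h, mul_zero])
  have hleadmul : g.leadingCoeff * r.leadingCoeff = a m * b m := by
    rw [← hlead, hr, leadingCoeff_mul]
  have hgl : ¬ (p : ℤ) ∣ g.leadingCoeff := fun h => hpam_bm (hleadmul ▸ h.mul_right _)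
  have hgev0 : g.eval 0 ≠ 0 := by
    intro h
    have : Fz.eval 0 = 0 := by rw [hr, eval_mul, h, zero_mul]
    rw [hF00] at this
    exact mul_ne_zero ha0' hb0 this
  -- ==================== valuation part ====================
  set K : Type := (Fz.map (Int.castRingHom ℚ)).SplittingField with hK
  haveI : CharZero K := charZero_of_injective_algebraMap (algebraMap ℚ K).injective
  obtain ⟨Γ₀, _, v, hπ1, hπ0, hvunit⟩ := my_exists_valuation K hp
  set π := v ((p : ℕ) : K) with hπ
  have hcastp : (((p : ℕ) : ℤ) : K) = ((p : ℕ) : K) := by push_cast; ring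
  have hvint : ∀ n : ℤ, n ≠ 0 → v ((n : ℤ) : K) = π ^ (padicValInt p n) := by
    intro n hn
    set e := padicValInt p n with he
    obtain ⟨u, hu⟩ := padicValInt_dvd (p := p) n
    have hpu : ¬ (p : ℤ) ∣ u := by
      intro hdvd
      obtain ⟨w, hw⟩ := hdvd
      have hdvd2 : (p : ℤ) ^ (e + 1) ∣ n := ⟨w, by rw [hu, hw]; ring⟩
      rcases (padicValInt_dvd_iff (e + 1) n).mp hdvd2 with h | h
      · exact hn h
      · rw [← he] at h; omega
    rw [hu]
    push_cast
    erw [Int.cast_mul, Int.cast_pow, Int.cast_natCast]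
    rw [v.map_mul, v.map_pow, hvunit u hpu, mul_one, hπ, he]
  have hvle1 : ∀ n : ℤ, v ((n : ℤ) : K) ≤ 1 := by
    intro n
    by_cases hn : n = 0
    · rw [hn]; simp
    · rw [hvint n hn]; exact pow_le_one' hπ1.le _
  set φK : ℤ →+* K := Int.castRingHom K with hφK
  have hinjK : Function.Injective φK := Int.cast_injective
  set FK := Fz.map φK with hFK
  have hFKsum : FK = ∑ j ∈ Finset.range (m + 1), C (((a j * b j : ℤ)) : K) * X ^ j := by
    ext i
    rw [hFK, coeff_map, hFzcoeff, finset_sum_coeff]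
    simp only [coeff_C_mul, coeff_X_pow, mul_ite, mul_one, mul_zero]
    rw [Finset.sum_ite_eq (Finset.range (m + 1)) i (fun j => ((a j * b j : ℤ) : K))]
    split_ifs with h
    · rfl
    · exact map_zero φK
  set ν0 := padicValInt p (b 0) with hν0
  have hπν0 : (π : Γ₀) ^ ν0 ≠ 0 := pow_ne_zero _ hπ0
  have hroot : ∀ α : K, FK.eval α = 0 → π < v α ^ k := by
    intro α hα
    by_contra hcon
    push_neg at hcon
    have hterm : ∀ j ∈ (Finset.range (m + 1)).erase 0,
        v (((a j * b j : ℤ) : K) * α ^ j) < π ^ ν0 := by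
      intro j hj
      have hj0 : j ≠ 0 ∧ j ∈ Finset.range (m + 1) := by
        simpa [Finset.mem_erase] using hj
      by_cases hzero : a j * b j = 0
      · rw [hzero]
        simpa using (zero_lt_iff.mpr hπν0)
      · have hbj : b j ≠ 0 := right_ne_zero_of_mul hzero
        have h1j : 1 ≤ j := Nat.one_le_iff_ne_zero.mpr hj0.1
        have hjm : j ≤ m := by
          have := Finset.mem_range.mp hj0.2; omega
        have hsl := hslope j h1j hjm hbj
        set νj := padicValInt p (b j) with hνj
        have hnat : k * ν0 < k * νj + j := by
          have h2 : (k : ℤ) * ν0 - (k : ℤ) * νj < j := by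
            rw [← mul_sub]; exact hsl
          have h3 : (k : ℤ) * ν0 < (k : ℤ) * νj + j := by linarith
          exact_mod_cast h3
        have hstep : (π ^ νj * v α ^ j) ^ k < (π ^ ν0) ^ k := by
          have e1 : (π ^ νj * v α ^ j) ^ k = π ^ (k * νj) * (v α ^ k) ^ j := by
            rw [mul_pow, ← pow_mul, ← pow_mul, ← pow_mul]
            ring_nf
          have e2 : (π ^ ν0) ^ k = π ^ (k * ν0) := by
            rw [← pow_mul]; ring_nf
          rw [e1, e2]
          calc π ^ (k * νj) * (v α ^ k) ^ j
              ≤ π ^ (k * νj) * π ^ j := mul_le_mul' le_rfl (pow_le_pow_left' hcon j)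
            _ = π ^ (k * νj + j) := by rw [pow_add]
            _ < π ^ (k * ν0) := my_pow_anti hπ0 hπ1 hnat
        have hlt : π ^ νj * v α ^ j < π ^ ν0 := my_lt_of_pow_lt_pow hstep
        calc v (((a j * b j : ℤ) : K) * α ^ j)
            = v ((a j : ℤ) : K) * v ((b j : ℤ) : K) * v α ^ j := by
              push_cast
              rw [show ((a j * b j : ℤ) : K) = ((a j : ℤ) : K) * ((b j : ℤ) : K) from map_mul φK (a j) (b j)]
              rw [v.map_mul, v.map_mul, v.map_pow]
          _ ≤ 1 * π ^ νj * v α ^ j := by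
              refine mul_le_mul' (mul_le_mul' (hvle1 _) (le_of_eq (hvint _ hbj))) le_rfl
          _ = π ^ νj * v α ^ j := by rw [one_mul]
          _ < π ^ ν0 := hlt
    have hS : v (∑ j ∈ (Finset.range (m + 1)).erase 0, ((a j * b j : ℤ) : K) * α ^ j)
        < π ^ ν0 := Valuation.map_sum_lt v hπν0 hterm
    have heval : FK.eval α = ∑ j ∈ Finset.range (m + 1), ((a j * b j : ℤ) : K) * α ^ j := by
      rw [hFKsum, eval_finset_sum]
      refine Finset.sum_congr rfl fun j _ => ?_
      rw [eval_mul, eval_pow, eval_C, eval_X]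
    have hsplit2 : FK.eval α = ((a 0 * b 0 : ℤ) : K) * α ^ 0
        + ∑ j ∈ (Finset.range (m + 1)).erase 0, ((a j * b j : ℤ) : K) * α ^ j := by
      rw [heval, ← Finset.add_sum_erase _ _ (Finset.mem_range.mpr (Nat.succ_pos m))]
    have hv0 : v (((a 0 * b 0 : ℤ) : K) * α ^ 0) = π ^ ν0 := by
      rw [pow_zero, mul_one]
      push_cast
      rw [show ((a 0 * b 0 : ℤ) : K) = ((a 0 : ℤ) : K) * ((b 0 : ℤ) : K) from map_mul φK (a 0) (b 0)]
      rw [v.map_mul, hvunit (a 0) ha0, one_mul, hvint _ hb0]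
    have hvFK : v (FK.eval α) = π ^ ν0 := by
      rw [hsplit2, Valuation.map_add_eq_of_lt_left v (by rw [hv0]; exact hS), hv0]
    rw [hα] at hvFK
    simp at hvFK
    exact hπν0 hvFK.symm
  -- ==================== the factor g over K ====================
  set gK := g.map φK with hgKdef
  have hgK0 : gK ≠ 0 := (Polynomial.map_ne_zero_iff hinjK).mpr hg0
  have hFQ0 : Fz.map (Int.castRingHom ℚ) ≠ 0 :=
    (Polynomial.map_ne_zero_iff (f := Int.castRingHom ℚ) Int.cast_injective).mpr hFz0
  have hsplits : Splits gK := by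
    have h1 : Splits ((Fz.map (Int.castRingHom ℚ)).map (algebraMap ℚ K)) :=
      SplittingField.splits _
    have h2 : (g.map (Int.castRingHom ℚ)) ∣ (Fz.map (Int.castRingHom ℚ)) :=
      Polynomial.map_dvd _ ⟨r, hr⟩
    have h3 : Splits ((g.map (Int.castRingHom ℚ)).map (algebraMap ℚ K)) :=
      Splits.of_dvd h1 (map_ne_zero hFQ0) (Polynomial.map_dvd _ h2)
    have h4 : gK = (g.map (Int.castRingHom ℚ)).map (algebraMap ℚ K) := by
      rw [hgKdef, Polynomial.map_map]
      congr 1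
    rw [h4]
    exact h3
  have hprod := hsplits.eq_prod_roots
  have hcard : Multiset.card gK.roots = d := by
    have h1 := hsplits.natDegree_eq_card_roots
    rw [← h1, hgKdef]
    exact natDegree_map_eq_of_injective hinjK g
  have hrootsFK : ∀ α ∈ gK.roots, FK.eval α = 0 := by
    intro α hαmem
    have hroot0 : gK.eval α = 0 := (mem_roots hgK0).mp hαmem
    have hFKfac : FK = gK * r.map φK := by
      rw [hFK, hgKdef, ← Polynomial.map_mul, ← hr]
    rw [hFKfac, eval_mul, hroot0, zero_mul]
  -- evaluate g at 0 and compute valuation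
  have e0 : gK.eval 0 = ((g.eval 0 : ℤ) : K) := eval_zero_map φK g
  have hleadK : gK.leadingCoeff = ((g.leadingCoeff : ℤ) : K) := leadingCoeff_map_of_injective hinjK g
  set S : Multiset Γ₀ := gK.roots.map (fun x => v x) with hSdef
  have hvgev : v ((g.eval 0 : ℤ) : K) = S.prod := by
    rw [← e0]
    conv_lhs => rw [hprod]
    rw [eval_mul, eval_C, v.map_mul, hleadK, hvunit _ hgl, one_mul, eval_multiset_prod,
      Multiset.map_map, map_multiset_prod, Multiset.map_map]
    refine congrArg Multiset.prod ?_
    refine Multiset.map_congr rfl fun x _ => ?_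
    simp [Function.comp, Valuation.map_neg]
  have hSel : ∀ x ∈ S, π < x ^ k := by
    intro x hx
    obtain ⟨α, hα, rfl⟩ := Multiset.mem_map.mp hx
    exact hroot α (hrootsFK α hα)
  have hScard : Multiset.card S = d := by rw [hSdef, Multiset.card_map, hcard]
  have hSne : S ≠ 0 := by
    intro h
    rw [h] at hScard
    simp at hScard
    omega
  have hstrict : π ^ d < S.prod ^ k := by
    rw [← hScard]
    exact my_multiset_prod_strict hπ0 S hSel hSne
  have hπkd : π ^ k ≤ π ^ d := pow_le_pow_right_of_le_one' hπ1.le hdk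
  have hπS : π < S.prod := my_lt_of_pow_lt_pow (lt_of_le_of_lt hπkd hstrict)
  have hvg0 : v ((g.eval 0 : ℤ) : K) = π ^ (padicValInt p (g.eval 0)) := hvint _ hgev0
  have hpg0 : ¬ (p : ℤ) ∣ g.eval 0 := by
    intro hdvd
    have h1le : 1 ≤ padicValInt p (g.eval 0) := by
      rcases (padicValInt_dvd_iff 1 (g.eval 0)).mp (by rwa [pow_one]) with h | h
      · exact absurd h hgev0
      · exact h
    have : π ^ (padicValInt p (g.eval 0)) ≤ π ^ 1 :=
      pow_le_pow_right_of_le_one' hπ1.le h1le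
    rw [pow_one] at this
    rw [hvgev] at hvg0
    rw [← hvg0] at this
    exact absurd hπS (not_lt.mpr this)
  -- ==================== mod p part ====================
  set φ : ℤ →+* ZMod p := Int.castRingHom (ZMod p) with hφ
  have hcast : ∀ n : ℤ, (φ n = 0) ↔ (p : ℤ) ∣ n := fun n =>
    ZMod.intCast_zmod_eq_zero_iff_dvd n p
  set Fp := Fz.map φ with hFp
  set gp := g.map φ with hgp
  have hml : l + 1 < m - l := by omega
  have hFpcoeff : ∀ i, i < m - l → Fp.coeff i = 0 := by
    intro i hi
    rw [hFp, coeff_map, hFzcoeff]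
    by_cases him : i ∈ Finset.range (m + 1)
    · rw [if_pos him]
      exact (hcast _).mpr ((hpbj i (by omega)).mul_left _)
    · rw [if_neg him, map_zero]
  obtain ⟨u, hu⟩ := X_pow_dvd_iff.mpr hFpcoeff
  have hFpm : Fp.coeff m ≠ 0 := by
    rw [hFp, coeff_map, hFm]
    exact fun h => hpam_bm ((hcast _).mp h)
  have hFp0 : Fp ≠ 0 := fun h => hFpm (by rw [h, coeff_zero])
  have hFpdeg : Fp.natDegree = m := by
    refine le_antisymm ?_ (le_natDegree_of_ne_zero hFpm)
    calc Fp.natDegree ≤ Fz.natDegree := natDegree_map_le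
      _ = m := hdeg
  have hu0 : u ≠ 0 := by
    rintro rfl
    rw [mul_zero] at hu
    exact hFp0 hu
  have hudeg : u.natDegree = l := by
    have hXne : (X : (ZMod p)[X]) ^ (m - l) ≠ 0 := pow_ne_zero _ X_ne_zero
    have h1 : Fp.natDegree = (m - l) + u.natDegree := by
      rw [hu, natDegree_mul hXne hu0, natDegree_X_pow]
    omega
  have hgpdeg : gp.natDegree = d := by
    rw [hgp]
    exact natDegree_map_of_leadingCoeff_ne_zero φ (fun h => hgl ((hcast _).mp h))
  have hgpdvd : gp ∣ Fp := Polynomial.map_dvd φ ⟨r, hr⟩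
  have hgp00 : gp.coeff 0 ≠ 0 := by
    rw [hgp, coeff_map]
    intro h
    exact hpg0 (by rwa [← coeff_zero_eq_eval_zero, ← (hcast _)])
  have hcop : IsCoprime gp ((X : (ZMod p)[X]) ^ (m - l)) := by
    have hX : IsCoprime gp (X : (ZMod p)[X]) := by
      rcases (Polynomial.irreducible_X (R := ZMod p)).isCoprime_or_dvd gp with h | h
      · exact h.symm
      · exact absurd (X_dvd_iff.mp h) hgp00
    exact hX.pow_right
  have hgpu : gp ∣ u := by
    have h1 : gp ∣ (X : (ZMod p)[X]) ^ (m - l) * u := hu ▸ hgpdvd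
    exact hcop.dvd_of_dvd_mul_left h1
  have hfinal : gp.natDegree ≤ u.natDegree := natDegree_le_of_dvd hgpu hu0
  rw [hgpdeg, hudeg] at hfinal
  omega
end

section
/- Let n be a positive integer, a_0, a_1, …, a_n arbitrary integers with a_0·a_n ≠ 0, and set h(x) = ∑_{j=0}^{n} a_j·x^j/j! ∈ ℚ[x]. Assume h(x) has a factor in ℚ[x] of degree k with k ≥ 1, and suppose there exists a prime p > k such that p divides n(n−1)⋯(n−k+1). Then p divides a_0·a_n. -/
open Polynomial Finset




section Aux
variable (p : ℕ) [hp : Fact p.Prime]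

lemma stl_val_rest {ι : Type*} (s : Finset ι) (F : ι → ℚ) (c : ℤ)
    (h : ∀ j ∈ s, F j = 0 ∨ c < padicValRat p (F j)) :
    (∑ j ∈ s, F j) = 0 ∨ ((∑ j ∈ s, F j) ≠ 0 ∧ c < padicValRat p (∑ j ∈ s, F j)) := by
  classical
  induction s using Finset.induction_on with
  | empty => simp
  | @insert a s ha ih =>
    rw [Finset.sum_insert ha]
    have ha' := h a (Finset.mem_insert_self a s)
    have ih' := ih (fun j hj => h j (Finset.mem_insert_of_mem hj))
    rcases ha' with h0 | hva
    · simpa [h0] using ih'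
    rcases ih' with h0 | ⟨hs0, hvs⟩
    · by_cases hFa : F a = 0
      · simp [h0, hFa]
      · exact Or.inr ⟨by simpa [h0] using hFa, by simpa [h0] using hva⟩
    by_cases hsum : F a + ∑ j ∈ s, F j = 0
    · exact Or.inl hsum
    · exact Or.inr ⟨hsum, lt_of_lt_of_le (lt_min hva hvs)
        (padicValRat.min_le_padicValRat_add hsum)⟩

lemma stl_val_sum {ι : Type*} (s : Finset ι) (F : ι → ℚ) (i₀ : ι) (hi₀ : i₀ ∈ s)
    (hF : F i₀ ≠ 0)
    (h : ∀ j ∈ s, j ≠ i₀ → F j = 0 ∨ padicValRat p (F i₀) < padicValRat p (F j)) :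
    (∑ j ∈ s, F j) ≠ 0 ∧ padicValRat p (∑ j ∈ s, F j) = padicValRat p (F i₀) := by
  classical
  rw [← Finset.add_sum_erase s F hi₀]
  have hrest := stl_val_rest p (s.erase i₀) F (padicValRat p (F i₀))
    (fun j hj => h j (Finset.mem_of_mem_erase hj) (Finset.ne_of_mem_erase hj))
  rcases hrest with h0 | ⟨hrne, hlt⟩
  · simp [h0, hF]
  · have hne : F i₀ + ∑ j ∈ s.erase i₀, F j ≠ 0 := by
      intro heq
      have : ∑ j ∈ s.erase i₀, F j = -F i₀ := by linarith
      rw [this, padicValRat.neg] at hlt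
      exact lt_irrefl _ hlt
    exact ⟨hne, padicValRat.add_eq_of_lt hne hF hrne hlt⟩

lemma stl_dumas (q r : ℚ[X]) {dq dr : ℕ} (hq : q.coeff dq ≠ 0) (hr : r.coeff dr ≠ 0)
    (H : ∀ i j : ℕ, i + j = dq + dr → ¬(i = dq ∧ j = dr) → q.coeff i ≠ 0 → r.coeff j ≠ 0 →
      padicValRat p (q.coeff dq) + padicValRat p (r.coeff dr) <
        padicValRat p (q.coeff i) + padicValRat p (r.coeff j)) :
    (q * r).coeff (dq + dr) ≠ 0 ∧ padicValRat p ((q * r).coeff (dq + dr)) =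
      padicValRat p (q.coeff dq) + padicValRat p (r.coeff dr) := by
  rw [Polynomial.coeff_mul]
  have hmem : (dq, dr) ∈ Finset.HasAntidiagonal.antidiagonal (dq + dr) := by
    simp [Finset.HasAntidiagonal.mem_antidiagonal]
  have := stl_val_sum p (Finset.HasAntidiagonal.antidiagonal (dq + dr))
    (fun x => q.coeff x.1 * r.coeff x.2) (dq, dr) hmem (mul_ne_zero hq hr) ?_
  · rcases this with ⟨h1, h2⟩
    refine ⟨h1, ?_⟩
    rw [h2, padicValRat.mul hq hr]
  · rintro ⟨i, j⟩ hij hne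
    simp only [Finset.HasAntidiagonal.mem_antidiagonal] at hij
    by_cases hqi : q.coeff i = 0
    · exact Or.inl (by simp [hqi])
    by_cases hrj : r.coeff j = 0
    · exact Or.inl (by simp [hrj])
    refine Or.inr ?_
    rw [padicValRat.mul hq hr, padicValRat.mul hqi hrj]
    refine H i j hij ?_ hqi hrj
    rintro ⟨rfl, rfl⟩
    exact hne rfl

lemma stl_argmin (g : ℚ[X]) (hg : g ≠ 0) (φ : ℕ → ℤ) :
    ∃ d ∈ g.support, (∀ j ∈ g.support, φ d ≤ φ j) ∧
      (∀ j ∈ g.support, φ j = φ d → d ≤ j) := by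
  classical
  have hne : g.support.Nonempty := Polynomial.nonempty_support_iff.mpr hg
  set W := g.support.inf' hne φ with hW
  obtain ⟨i, hi, hiW⟩ := Finset.exists_mem_eq_inf' hne φ
  have htne : (g.support.filter (fun j => φ j = W)).Nonempty :=
    ⟨i, Finset.mem_filter.mpr ⟨hi, hiW.symm⟩⟩
  set d := (g.support.filter (fun j => φ j = W)).min' htne with hd
  have hdmem := Finset.min'_mem _ htne
  rw [Finset.mem_filter] at hdmem
  refine ⟨d, hdmem.1, fun j hj => ?_, fun j hj hφ => ?_⟩
  · rw [hdmem.2]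
    exact Finset.inf'_le φ hj
  · exact Finset.min'_le _ j (Finset.mem_filter.mpr ⟨hj, by rw [hφ, hdmem.2]⟩)

lemma stl_argmax (g : ℚ[X]) (hg : g ≠ 0) (φ : ℕ → ℤ) :
    ∃ d ∈ g.support, (∀ j ∈ g.support, φ d ≤ φ j) ∧
      (∀ j ∈ g.support, φ j = φ d → j ≤ d) := by
  classical
  have hne : g.support.Nonempty := Polynomial.nonempty_support_iff.mpr hg
  set W := g.support.inf' hne φ with hW
  obtain ⟨i, hi, hiW⟩ := Finset.exists_mem_eq_inf' hne φ
  have htne : (g.support.filter (fun j => φ j = W)).Nonempty :=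
    ⟨i, Finset.mem_filter.mpr ⟨hi, hiW.symm⟩⟩
  set d := (g.support.filter (fun j => φ j = W)).max' htne with hd
  have hdmem := Finset.max'_mem _ htne
  rw [Finset.mem_filter] at hdmem
  refine ⟨d, hdmem.1, fun j hj => ?_, fun j hj hφ => ?_⟩
  · rw [hdmem.2]
    exact Finset.inf'_le φ hj
  · exact Finset.le_max' _ j (Finset.mem_filter.mpr ⟨hj, by rw [hφ, hdmem.2]⟩)

end Aux

section Aux2
variable (p : ℕ) [hp : Fact p.Prime]
lemma stl_vzpow (z : ℤ) : padicValRat p ((p : ℚ) ^ z) = z := by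
  have hpne : ((p : ℚ)) ≠ 0 := by exact_mod_cast hp.out.ne_zero
  obtain ⟨m, rfl | rfl⟩ := z.eq_nat_or_neg
  · rw [zpow_natCast, padicValRat.pow _, padicValRat.self hp.out.one_lt]; ring
  · rw [zpow_neg, padicValRat.inv, zpow_natCast, padicValRat.pow _,
      padicValRat.self hp.out.one_lt]; ring
end Aux2




section NT
variable (p : ℕ) [hp : Fact p.Prime]

lemma stl_digit_sum_pos (l : ℕ) (hl : 1 ≤ l) : 1 ≤ (p.digits l).sum := by
  by_contra hcon
  push_neg at hcon
  have hsum : (p.digits l).sum = 0 := by omega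
  have hnil : p.digits l ≠ [] := Nat.digits_ne_nil_iff_ne_zero.mpr (by omega)
  have hlast := Nat.getLast_digit_ne_zero p (m := l) (by omega)
  have hmem : (p.digits l).getLast hnil ∈ p.digits l := List.getLast_mem hnil
  have := (List.sum_eq_zero_iff).mp hsum _ hmem
  exact hlast this

lemma stl_kfac (k l : ℕ) (hkp : k < p) (hl : 1 ≤ l) :
    k * padicValNat p (l.factorial) + 1 ≤ l := by
  have hleg := sub_one_mul_padicValNat_factorial (p := p) l
  have hS := stl_digit_sum_pos p l hl
  have h2 : 2 ≤ p := hp.out.two_le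
  have hk : k ≤ p - 1 := by omega
  have h1 : k * padicValNat p (l.factorial) ≤ (p - 1) * padicValNat p (l.factorial) :=
    Nat.mul_le_mul_right _ hk
  have h2' : l - (p.digits l).sum ≤ l - 1 := Nat.sub_le_sub_left hS l
  omega

lemma stl_fact_gap (j m n : ℕ) (hj : j < m) (hmn : m ≤ n) (hpm : p ∣ m) (hm : 1 ≤ m) :
    padicValNat p (j.factorial) + 1 ≤ padicValNat p (n.factorial) := by
  have h2 : 2 ≤ p := hp.out.two_le
  have hpn : p ≤ n := le_trans (Nat.le_of_dvd (by omega) hpm) hmn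
  set b := Nat.log p n + 1 with hb
  have hbn : Nat.log p n < b := by omega
  have hbj : Nat.log p j < b := lt_of_le_of_lt (Nat.log_mono_right (by omega)) hbn
  have hvn : padicValNat p n.factorial = ∑ i ∈ Finset.Ico 1 b, n / p ^ i :=
    padicValNat_factorial hbn
  have hvj : padicValNat p j.factorial = ∑ i ∈ Finset.Ico 1 b, j / p ^ i :=
    padicValNat_factorial hbj
  have hlog1 : 1 ≤ Nat.log p n := by
    rw [Nat.le_log_iff_pow_le (by omega) (by omega)]
    simpa using hpn
  have h1b : 1 < b := by omega
  rw [hvn, hvj, Finset.sum_eq_sum_Ico_succ_bot h1b, Finset.sum_eq_sum_Ico_succ_bot h1b]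
  have hterm1 : j / p ^ 1 + 1 ≤ n / p ^ 1 := by
    have h1 : j / p < m / p := Nat.div_lt_div_of_lt_of_dvd hpm hj
    have h2 : m / p ≤ n / p := Nat.div_le_div_right hmn
    simpa [pow_one] using by omega
  have hrest : ∑ i ∈ Finset.Ico (1+1) b, j / p ^ i ≤ ∑ i ∈ Finset.Ico (1+1) b, n / p ^ i :=
    Finset.sum_le_sum (fun i _ => Nat.div_le_div_right (by omega))
  omega

end NT
theorem shorey_tijdeman_lemma (n k : ℕ) (hn : 1 ≤ n) (a : ℕ → ℤ)
    (ha : a 0 * a n ≠ 0) (hk : 1 ≤ k)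
    (hfac : ∃ q : ℚ[X], q.natDegree = k ∧
      q ∣ ∑ j ∈ Finset.range (n + 1),
        Polynomial.C ((a j : ℚ) / (j.factorial : ℚ)) * Polynomial.X ^ j)
    (p : ℕ) (hp : p.Prime) (hpk : k < p)
    (hpdvd : (p : ℤ) ∣ ∏ i ∈ Finset.range k, ((n : ℤ) - (i : ℤ))) :
    (p : ℤ) ∣ a 0 * a n := by
  haveI hpf : Fact p.Prime := ⟨hp⟩
  obtain ⟨q, hqk, r0, hhr0⟩ := hfac
  by_contra hcon
  have ha0 : a 0 ≠ 0 := left_ne_zero_of_mul ha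
  have han : a n ≠ 0 := right_ne_zero_of_mul ha
  have hpa0 : ¬ (p : ℤ) ∣ a 0 := fun hd => hcon (hd.mul_right _)
  have hpan : ¬ (p : ℤ) ∣ a n := fun hd => hcon (hd.mul_left _)
  set h : ℚ[X] := ∑ j ∈ Finset.range (n + 1),
      Polynomial.C ((a j : ℚ) / (j.factorial : ℚ)) * Polynomial.X ^ j with hh
  -- coefficients of h
  have hcoeff : ∀ j : ℕ, h.coeff j = if j ≤ n then (a j : ℚ) / (j.factorial : ℚ) else 0 := by
    intro j
    rw [hh, finset_sum_coeff]
    simp only [coeff_C_mul, coeff_X_pow, mul_ite, mul_one, mul_zero]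
    rw [Finset.sum_ite_eq (Finset.range (n + 1)) j
      (fun i => (a i : ℚ) / (i.factorial : ℚ))]
    simp [Nat.lt_succ_iff]
  have hfacn : (Nat.factorial n : ℚ) ≠ 0 := by
    exact_mod_cast Nat.factorial_ne_zero n
  have hhn : h.coeff n ≠ 0 := by
    rw [hcoeff n, if_pos le_rfl]
    exact div_ne_zero (by exact_mod_cast han) hfacn
  have hn0 : h ≠ 0 := fun hz => hhn (by simp [hz])
  have hdeg : h.natDegree = n := by
    refine le_antisymm ?_ (le_natDegree_of_ne_zero hhn)
    rw [natDegree_le_iff_coeff_eq_zero]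
    intro N hN
    rw [hcoeff N, if_neg (by omega)]
  have hq0 : q ≠ 0 := by
    intro hz
    rw [hz, natDegree_zero] at hqk
    omega
  have hr00 : r0 ≠ 0 := by
    intro hz
    rw [hz, mul_zero] at hhr0
    exact hn0 hhr0
  have hdegr0 : k + r0.natDegree = n := by
    have := natDegree_mul hq0 hr00
    rw [← hhr0, hdeg, hqk] at this
    omega
  have hkn : k ≤ n := by omega
  set B : ℕ → ℤ := fun j => a j * ((n.factorial / j.factorial : ℕ) : ℤ) with hB
  set f : ℚ[X] := Polynomial.C (n.factorial : ℚ) * h with hf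
  have hfco : ∀ j, j ≤ n → f.coeff j = ((B j : ℤ) : ℚ) := by
    intro j hj
    rw [hf, coeff_C_mul, hcoeff j, if_pos hj, hB]
    have hdvd : j.factorial ∣ n.factorial := Nat.factorial_dvd_factorial hj
    have hjne : (j.factorial : ℚ) ≠ 0 := by exact_mod_cast Nat.factorial_ne_zero j
    rw [Int.cast_mul, Int.cast_natCast, Nat.cast_div hdvd hjne]
    ring
  have hfco' : ∀ j, n < j → f.coeff j = 0 := by
    intro j hj
    rw [hf, coeff_C_mul, hcoeff j, if_neg (by omega), mul_zero]
  set r1 : ℚ[X] := Polynomial.C (n.factorial : ℚ) * r0 with hr1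
  have hfqr : f = q * r1 := by
    rw [hf, hhr0, hr1]; ring
  have hr10 : r1 ≠ 0 := by
    rw [hr1]
    exact mul_ne_zero (by simpa using hfacn) hr00
  -- scaling
  have hqs : q.support.Nonempty := Polynomial.nonempty_support_iff.mpr hq0
  set T : ℤ := q.support.inf' hqs (fun j => padicValRat p (q.coeff j)) with hT
  set u : ℚ := (p : ℚ) ^ (-T) with hu
  have hune : u ≠ 0 := zpow_ne_zero _ (by exact_mod_cast hp.ne_zero)
  have hvu : padicValRat p u = -T := stl_vzpow p (-T)
  set q' : ℚ[X] := Polynomial.C u * q with hq'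
  set r' : ℚ[X] := Polynomial.C u⁻¹ * r1 with hr'
  have hq'0 : q' ≠ 0 := mul_ne_zero (by simpa using hune) hq0
  have hr'0 : r' ≠ 0 := mul_ne_zero (by simpa using inv_ne_zero hune) hr10
  have hfq'r' : f = q' * r' := by
    rw [hq', hr', hfqr]
    rw [mul_mul_mul_comm, ← Polynomial.C_mul, mul_inv_cancel₀ hune]
    simp
  have hq'deg : q'.natDegree = k := by
    rw [hq', natDegree_C_mul hune, hqk]
  set e : ℕ := r'.natDegree with he
  have hr'deg : k + e = n := by
    rw [he, hr', natDegree_C_mul (inv_ne_zero hune), hr1,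
      natDegree_C_mul (by simpa using hfacn)]
    exact hdegr0
  -- q' coefficient valuations
  have hq'co : ∀ j, q'.coeff j = u * q.coeff j := fun j => by
    rw [hq', coeff_C_mul]
  have hvq'ge : ∀ j, q'.coeff j ≠ 0 → 0 ≤ padicValRat p (q'.coeff j) := by
    intro j hj
    have hqj : q.coeff j ≠ 0 := by
      intro hz; rw [hq'co j, hz, mul_zero] at hj; exact hj rfl
    rw [hq'co j, padicValRat.mul hune hqj, hvu]
    have : T ≤ padicValRat p (q.coeff j) :=
      Finset.inf'_le _ (Polynomial.mem_support_iff.mpr hqj)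
    omega
  have hvq'min : ∃ j0, q'.coeff j0 ≠ 0 ∧ j0 ≤ k ∧ padicValRat p (q'.coeff j0) = 0 := by
    obtain ⟨j0, hj0s, hj0⟩ := Finset.exists_mem_eq_inf' hqs (fun j => padicValRat p (q.coeff j))
    have hqj0 : q.coeff j0 ≠ 0 := Polynomial.mem_support_iff.mp hj0s
    refine ⟨j0, ?_, ?_, ?_⟩
    · rw [hq'co j0]; exact mul_ne_zero hune hqj0
    · rw [← hqk]; exact le_natDegree_of_mem_supp _ hj0s
    · rw [hq'co j0, padicValRat.mul hune hqj0, hvu, ← hj0, ← hT]; ring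
  -- valuations of the integer coefficients of f
  have hvf : ∀ l, l ≤ n → a l ≠ 0 →
      padicValRat p (f.coeff l) =
        (padicValInt p (a l) : ℤ) + (padicValNat p (n.factorial / l.factorial) : ℤ) := by
    intro l hl hal
    have hdvd : l.factorial ∣ n.factorial := Nat.factorial_dvd_factorial hl
    have hq1 : (n.factorial / l.factorial : ℕ) ≠ 0 := by
      have := Nat.div_pos (Nat.le_of_dvd (Nat.factorial_pos n) hdvd) (Nat.factorial_pos l)
      omega
    rw [hfco l hl, hB]
    have hcast : ((a l * ((n.factorial / l.factorial : ℕ) : ℤ) : ℤ) : ℚ)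
        = ((a l : ℤ) : ℚ) * (((n.factorial / l.factorial : ℕ) : ℕ) : ℚ) := by
      rw [Int.cast_mul, Int.cast_natCast]
    rw [hcast, padicValRat.mul (by exact_mod_cast hal) (by exact_mod_cast hq1),
      padicValRat.of_int, padicValRat.of_nat]
  have hfne : ∀ l, l ≤ n → a l ≠ 0 → f.coeff l ≠ 0 := by
    intro l hl hal
    rw [hfco l hl]
    have hdvd : l.factorial ∣ n.factorial := Nat.factorial_dvd_factorial hl
    have hq1 : (n.factorial / l.factorial : ℕ) ≠ 0 := by
      have := Nat.div_pos (Nat.le_of_dvd (Nat.factorial_pos n) hdvd) (Nat.factorial_pos l)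
      omega
    rw [hB]
    have hcast : ((a l * ((n.factorial / l.factorial : ℕ) : ℤ) : ℤ) : ℚ)
        = ((a l : ℤ) : ℚ) * (((n.factorial / l.factorial : ℕ) : ℕ) : ℚ) := by
      rw [Int.cast_mul, Int.cast_natCast]
    rw [hcast]
    exact mul_ne_zero (by exact_mod_cast hal) (by exact_mod_cast hq1)
  have hfal : ∀ l, l ≤ n → f.coeff l ≠ 0 → a l ≠ 0 := by
    intro l hl hfl hal
    rw [hfco l hl, hB] at hfl
    simp [hal] at hfl
  have hvfge : ∀ l, l ≤ n → f.coeff l ≠ 0 → 0 ≤ padicValRat p (f.coeff l) := by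
    intro l hl hfl
    rw [hvf l hl (hfal l hl hfl)]
    positivity
  -- value at n
  have hfn : f.coeff n ≠ 0 := hfne n le_rfl han
  have hvfn : padicValRat p (f.coeff n) = 0 := by
    rw [hvf n le_rfl han, padicValInt.eq_zero_of_not_dvd hpan, Nat.div_self (Nat.factorial_pos n),
      padicValNat.one]
    simp
  -- value at 0
  have hf0 : f.coeff 0 ≠ 0 := hfne 0 (by omega) ha0
  set V : ℤ := (padicValNat p n.factorial : ℤ) with hV
  have hvf0 : padicValRat p (f.coeff 0) = V := by
    rw [hvf 0 (by omega) ha0, padicValInt.eq_zero_of_not_dvd hpa0]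
    simp [Nat.factorial, hV]
  -- key inequality F3
  have hF3 : ∀ l, 1 ≤ l → l ≤ n → f.coeff l ≠ 0 →
      (k : ℤ) * V + 1 ≤ (k : ℤ) * padicValRat p (f.coeff l) + l := by
    intro l hl1 hln hfl
    have hal := hfal l hln hfl
    have hdvd : l.factorial ∣ n.factorial := Nat.factorial_dvd_factorial hln
    have hsplit : padicValNat p l.factorial + padicValNat p (n.factorial / l.factorial)
        = padicValNat p n.factorial := by
      rw [← padicValNat.mul (Nat.factorial_ne_zero l)
        (by
          have := Nat.div_pos (Nat.le_of_dvd (Nat.factorial_pos n) hdvd) (Nat.factorial_pos l)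
          omega), Nat.mul_div_cancel' hdvd]
    have hkf := stl_kfac p k l hpk hl1
    rw [hvf l hln hal]
    have h1 : (0:ℤ) ≤ (padicValInt p (a l) : ℤ) := by positivity
    have h2 : (k : ℤ) * (padicValNat p l.factorial : ℤ) + 1 ≤ l := by exact_mod_cast hkf
    have hsplit' : (padicValNat p l.factorial : ℤ) +
        (padicValNat p (n.factorial / l.factorial) : ℤ) = V := by
      rw [hV]; exact_mod_cast hsplit
    have h5 : (k : ℤ) * V = (k : ℤ) * (padicValNat p l.factorial : ℤ)
        + (k : ℤ) * (padicValNat p (n.factorial / l.factorial) : ℤ) := by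
      rw [← hsplit']; ring
    have h6 : (0:ℤ) ≤ (k : ℤ) * (padicValInt p (a l) : ℤ) := by positivity
    have h7 : (k : ℤ) * ((padicValInt p (a l) : ℤ) + (padicValNat p (n.factorial / l.factorial) : ℤ))
        = (k : ℤ) * (padicValInt p (a l) : ℤ)
          + (k : ℤ) * (padicValNat p (n.factorial / l.factorial) : ℤ) := by ring
    rw [h7]
    linarith
  -- the multiple of p in (n-k, n]
  have hpZ : Prime (p : ℤ) := Nat.prime_iff_prime_int.mp hp
  obtain ⟨i₀, hi₀, hdvdi⟩ := hpZ.exists_mem_finset_dvd hpdvd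
  rw [Finset.mem_range] at hi₀
  set m : ℕ := n - i₀ with hm
  have hi₀n : i₀ < n := by omega
  have hmcast : ((n : ℤ) - (i₀ : ℤ)) = ((m : ℕ) : ℤ) := by
    rw [hm]; push_cast [Nat.cast_sub (le_of_lt hi₀n)]; ring
  have hpm : p ∣ m := by
    rw [hmcast] at hdvdi; exact_mod_cast hdvdi
  have hm1 : 1 ≤ m := by omega
  have hmn : m ≤ n := by omega
  have hmk : n < m + k := by omega
  have hF4 : ∀ l, l ≤ n → l < m → f.coeff l ≠ 0 → 1 ≤ padicValRat p (f.coeff l) := by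
    intro l hln hlm hfl
    have hal := hfal l hln hfl
    rw [hvf l hln hal]
    have hgap := stl_fact_gap p l m n hlm hmn hpm hm1
    have hdvd : l.factorial ∣ n.factorial := Nat.factorial_dvd_factorial hln
    have hsplit : padicValNat p l.factorial + padicValNat p (n.factorial / l.factorial)
        = padicValNat p n.factorial := by
      rw [← padicValNat.mul (Nat.factorial_ne_zero l)
        (by
          have := Nat.div_pos (Nat.le_of_dvd (Nat.factorial_pos n) hdvd) (Nat.factorial_pos l)
          omega), Nat.mul_div_cancel' hdvd]
    omega
  -- Newton polygon instance with slope 1/(n+1) : least indices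
  obtain ⟨dq, hdqs, hdqmin, hdqleast⟩ := stl_argmin q' hq'0
    (fun j => (n + 1 : ℤ) * padicValRat p (q'.coeff j) + j)
  obtain ⟨dr, hdrs, hdrmin, hdrleast⟩ := stl_argmin r' hr'0
    (fun j => (n + 1 : ℤ) * padicValRat p (r'.coeff j) + j)

  have hdqk : dq ≤ k := by rw [← hq'deg]; exact le_natDegree_of_mem_supp _ hdqs
  have hdre : dr ≤ e := le_natDegree_of_mem_supp _ hdrs
  have hdqco := Polynomial.mem_support_iff.mp hdqs
  have hdrco := Polynomial.mem_support_iff.mp hdrs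
  have hH1 : ∀ i j : ℕ, i + j = dq + dr → ¬(i = dq ∧ j = dr) → q'.coeff i ≠ 0 → r'.coeff j ≠ 0 →
      padicValRat p (q'.coeff dq) + padicValRat p (r'.coeff dr) <
        padicValRat p (q'.coeff i) + padicValRat p (r'.coeff j) := by
    intro i j hij hne hqi hrj
    have hcase : i < dq ∨ j < dr := by
      by_contra hc
      push_neg at hc
      exact hne ⟨by omega, by omega⟩
    have hijZ : (i : ℤ) + j = (dq : ℤ) + dr := by exact_mod_cast hij
    have hmulpos : (0:ℤ) < (n + 1 : ℤ) := by positivity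
    have key : (n + 1 : ℤ) * (padicValRat p (q'.coeff dq) + padicValRat p (r'.coeff dr)) <
        (n + 1 : ℤ) * (padicValRat p (q'.coeff i) + padicValRat p (r'.coeff j)) := by
      rw [mul_add, mul_add]
      rcases hcase with hcase | hcase
      · have hs1 : (n + 1 : ℤ) * padicValRat p (q'.coeff dq) + dq <
            (n + 1 : ℤ) * padicValRat p (q'.coeff i) + i := by
          have hge := hdqmin i (Polynomial.mem_support_iff.mpr hqi)
          refine lt_of_le_of_ne hge ?_
          intro heq
          have := hdqleast i (Polynomial.mem_support_iff.mpr hqi) heq.symm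
          omega
        have hs2 := hdrmin j (Polynomial.mem_support_iff.mpr hrj)
        linarith
      · have hs1 : (n + 1 : ℤ) * padicValRat p (r'.coeff dr) + dr <
            (n + 1 : ℤ) * padicValRat p (r'.coeff j) + j := by
          have hge := hdrmin j (Polynomial.mem_support_iff.mpr hrj)
          refine lt_of_le_of_ne hge ?_
          intro heq
          have := hdrleast j (Polynomial.mem_support_iff.mpr hrj) heq.symm
          omega
        have hs2 := hdqmin i (Polynomial.mem_support_iff.mpr hqi)
        linarith
    exact (mul_lt_mul_iff_right₀ hmulpos).mp key
  have hd1 := stl_dumas p q' r' hdqco hdrco hH1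
  rw [← hfq'r'] at hd1
  obtain ⟨hd1ne, hd1v⟩ := hd1
  have hddn : dq + dr ≤ n := by omega
  -- minimal valuation of q' at dq is 0
  obtain ⟨j0, hj0ne, hj0k, hj0v⟩ := hvq'min
  have hvdq0 : padicValRat p (q'.coeff dq) = 0 := by
    have hge := hvq'ge dq hdqco
    by_contra hne0
    have hge1 : 1 ≤ padicValRat p (q'.coeff dq) := by omega
    have hmin := hdqmin j0 (Polynomial.mem_support_iff.mpr hj0ne)
    rw [hj0v, mul_zero, zero_add] at hmin
    have h8 : (n + 1 : ℤ) * 1 ≤ (n + 1 : ℤ) * padicValRat p (q'.coeff dq) :=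
      mul_le_mul_of_nonneg_left hge1 (by positivity)
    have hj0n : (j0 : ℤ) ≤ n := by exact_mod_cast le_trans hj0k hkn
    have hdq0 : (0 : ℤ) ≤ dq := by positivity
    linarith
  -- dr has minimal valuation among r' coefficients
  have hvrmin : ∀ j, r'.coeff j ≠ 0 →
      padicValRat p (r'.coeff dr) ≤ padicValRat p (r'.coeff j) := by
    intro j hj
    by_contra hlt
    push_neg at hlt
    have hmin := hdrmin j (Polynomial.mem_support_iff.mpr hj)
    have hjn : (j : ℤ) ≤ n := by
      exact_mod_cast le_trans (le_natDegree_of_mem_supp _ (Polynomial.mem_support_iff.mpr hj))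
        (by omega : r'.natDegree ≤ n)
    have h9 : padicValRat p (r'.coeff j) ≤ padicValRat p (r'.coeff dr) - 1 := by omega
    have h10 : (n + 1 : ℤ) * padicValRat p (r'.coeff j) ≤
        (n + 1 : ℤ) * (padicValRat p (r'.coeff dr) - 1) :=
      mul_le_mul_of_nonneg_left h9 (by positivity)
    rw [mul_sub, mul_one] at h10
    have hdr0 : (0 : ℤ) ≤ dr := by positivity
    linarith
  -- top coefficients
  have htop : f.coeff n = q'.coeff k * r'.coeff e := by
    have h1 := coeff_mul_degree_add_degree q' r'
    simp only [← Polynomial.coeff_natDegree] at h1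
    rw [hq'deg, ← he, hr'deg] at h1
    rw [hfq'r', h1]
  have hq'kne : q'.coeff k ≠ 0 := fun hz => hfn (by rw [htop, hz, zero_mul])
  have hr'ene : r'.coeff e ≠ 0 := fun hz => hfn (by rw [htop, hz, mul_zero])
  have hsumtop : padicValRat p (q'.coeff k) + padicValRat p (r'.coeff e) = 0 := by
    rw [← padicValRat.mul hq'kne hr'ene, ← htop, hvfn]
  have hvq'k_ge := hvq'ge k hq'kne
  have hvr'e_le : padicValRat p (r'.coeff e) ≤ 0 := by omega
  -- valuation at dr is zero
  have hvdrge : 0 ≤ padicValRat p (r'.coeff dr) := by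
    have hge := hvfge (dq + dr) hddn hd1ne
    rw [hd1v, hvdq0] at hge
    omega
  have hvdr0 : padicValRat p (r'.coeff dr) = 0 :=
    le_antisymm (le_trans (hvrmin e hr'ene) hvr'e_le) hvdrge
  have hvrge : ∀ j, r'.coeff j ≠ 0 → 0 ≤ padicValRat p (r'.coeff j) := by
    intro j hj
    rw [← hvdr0]
    exact hvrmin j hj
  have hvr'e0 : padicValRat p (r'.coeff e) = 0 := le_antisymm hvr'e_le (hvrge e hr'ene)
  have hvq'k0 : padicValRat p (q'.coeff k) = 0 := by omega
  -- position of the zero-valuation part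
  have hmdd : m ≤ dq + dr := by
    by_contra hlt
    push_neg at hlt
    have hcon1 := hF4 (dq + dr) hddn hlt hd1ne
    rw [hd1v, hvdq0, hvdr0] at hcon1
    omega
  have hdq1 : 1 ≤ dq := by omega
  -- constant coefficients
  have hf0eq : f.coeff 0 = q'.coeff 0 * r'.coeff 0 := by
    rw [hfq'r', Polynomial.mul_coeff_zero]
  have hq'0ne : q'.coeff 0 ≠ 0 := fun hz => hf0 (by rw [hf0eq, hz, zero_mul])
  have hr'0ne : r'.coeff 0 ≠ 0 := fun hz => hf0 (by rw [hf0eq, hz, mul_zero])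
  have hvsum0 : padicValRat p (q'.coeff 0) + padicValRat p (r'.coeff 0) = V := by
    rw [← padicValRat.mul hq'0ne hr'0ne, ← hf0eq, hvf0]
  have hvq01 : 1 ≤ padicValRat p (q'.coeff 0) := by
    have hge := hvq'ge 0 hq'0ne
    rcases eq_or_lt_of_le hge with heq | hlt
    · exfalso
      have hmin := hdqmin 0 (Polynomial.mem_support_iff.mpr hq'0ne)
      rw [← heq, mul_zero, zero_add] at hmin
      have h11 : (0:ℤ) ≤ (n + 1 : ℤ) * padicValRat p (q'.coeff dq) :=
        mul_nonneg (by positivity) (hvq'ge dq hdqco)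
      have hdq1' : (1:ℤ) ≤ (dq : ℤ) := by exact_mod_cast hdq1
      push_cast at hmin
      linarith
    · omega
  -- Newton polygon instance with slope 1/k : greatest indices
  obtain ⟨Dq, hDqs, hDqmin, hDqgreat⟩ := stl_argmax q' hq'0
    (fun j => (k : ℤ) * padicValRat p (q'.coeff j) + j)
  obtain ⟨Dr, hDrs, hDrmin, hDrgreat⟩ := stl_argmax r' hr'0
    (fun j => (k : ℤ) * padicValRat p (r'.coeff j) + j)
  have hDqk : Dq ≤ k := by rw [← hq'deg]; exact le_natDegree_of_mem_supp _ hDqs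
  have hDre : Dr ≤ e := le_natDegree_of_mem_supp _ hDrs
  have hDqco := Polynomial.mem_support_iff.mp hDqs
  have hDrco := Polynomial.mem_support_iff.mp hDrs
  have hkpos : (0 : ℤ) < (k : ℤ) := by exact_mod_cast hk
  have hH2 : ∀ i j : ℕ, i + j = Dq + Dr → ¬(i = Dq ∧ j = Dr) → q'.coeff i ≠ 0 → r'.coeff j ≠ 0 →
      padicValRat p (q'.coeff Dq) + padicValRat p (r'.coeff Dr) <
        padicValRat p (q'.coeff i) + padicValRat p (r'.coeff j) := by
    intro i j hij hne hqi hrj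
    have hcase : Dq < i ∨ Dr < j := by
      by_contra hc
      push_neg at hc
      exact hne ⟨by omega, by omega⟩
    have hijZ : (i : ℤ) + j = (Dq : ℤ) + Dr := by exact_mod_cast hij
    have key : (k : ℤ) * (padicValRat p (q'.coeff Dq) + padicValRat p (r'.coeff Dr)) <
        (k : ℤ) * (padicValRat p (q'.coeff i) + padicValRat p (r'.coeff j)) := by
      rw [mul_add, mul_add]
      rcases hcase with hcase | hcase
      · have hs1 : (k : ℤ) * padicValRat p (q'.coeff Dq) + Dq <
            (k : ℤ) * padicValRat p (q'.coeff i) + i := by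
          have hge := hDqmin i (Polynomial.mem_support_iff.mpr hqi)
          refine lt_of_le_of_ne hge ?_
          intro heq
          have := hDqgreat i (Polynomial.mem_support_iff.mpr hqi) heq.symm
          omega
        have hs2 := hDrmin j (Polynomial.mem_support_iff.mpr hrj)
        linarith
      · have hs1 : (k : ℤ) * padicValRat p (r'.coeff Dr) + Dr <
            (k : ℤ) * padicValRat p (r'.coeff j) + j := by
          have hge := hDrmin j (Polynomial.mem_support_iff.mpr hrj)
          refine lt_of_le_of_ne hge ?_
          intro heq
          have := hDrgreat j (Polynomial.mem_support_iff.mpr hrj) heq.symm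
          omega
        have hs2 := hDqmin i (Polynomial.mem_support_iff.mpr hqi)
        linarith
    exact (mul_lt_mul_iff_right₀ hkpos).mp key
  have hd2 := stl_dumas p q' r' hDqco hDrco hH2
  rw [← hfq'r'] at hd2
  obtain ⟨hd2ne, hd2v⟩ := hd2
  have hDDn : Dq + Dr ≤ n := by omega
  -- the chain of inequalities
  have hφq0 : (k : ℤ) * padicValRat p (q'.coeff Dq) + Dq ≤
      (k : ℤ) * padicValRat p (q'.coeff 0) := by
    have := hDqmin 0 (Polynomial.mem_support_iff.mpr hq'0ne)
    simpa using this
  have hφr0 : (k : ℤ) * padicValRat p (r'.coeff Dr) + Dr ≤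
      (k : ℤ) * padicValRat p (r'.coeff 0) := by
    have := hDrmin 0 (Polynomial.mem_support_iff.mpr hr'0ne)
    simpa using this
  have hV' : (k : ℤ) * padicValRat p (q'.coeff 0) + (k : ℤ) * padicValRat p (r'.coeff 0)
      = (k : ℤ) * V := by
    rw [← hvsum0]; ring
  have hchain : (k : ℤ) * padicValRat p (f.coeff (Dq + Dr)) + ((Dq : ℤ) + Dr) ≤ (k : ℤ) * V := by
    rw [hd2v, mul_add]
    linarith
  have hDD0 : Dq + Dr = 0 := by
    by_contra hne0
    have h1le : 1 ≤ Dq + Dr := by omega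
    have hcon2 := hF3 (Dq + Dr) h1le hDDn hd2ne
    push_cast at hcon2
    linarith
  have hDq0 : Dq = 0 := by omega
  -- final contradiction
  have hks : k ∈ q'.support := Polynomial.mem_support_iff.mpr hq'kne
  have hφk := hDqmin k hks
  rw [hvq'k0, mul_zero, zero_add, hDq0] at hφk
  have hqv0 : (k : ℤ) * padicValRat p (q'.coeff 0) ≤ (k : ℤ) := by
    simpa using hφk
  have hle1 : padicValRat p (q'.coeff 0) ≤ 1 := by
    have := (mul_le_mul_iff_right₀ hkpos).mp (by simpa using hqv0 :
      (k : ℤ) * padicValRat p (q'.coeff 0) ≤ (k : ℤ) * 1)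
    exact this
  have heqv : padicValRat p (q'.coeff 0) = 1 := le_antisymm hle1 hvq01
  have hφkeq : ((fun j => (k : ℤ) * padicValRat p (q'.coeff j) + j) k)
      = ((fun j => (k : ℤ) * padicValRat p (q'.coeff j) + j) Dq) := by
    simp only [hDq0, hvq'k0, heqv]
    push_cast
    ring
  have hfin := hDqgreat k hks hφkeq
  omega
end

section
/- Let n be a positive integer and s an integer with s ≥ 9. Assume that g₁(x) = g₁(x,n,s) is the product of a polynomial of degree 1 and an irreducible polynomial in ℚ[x]. Let p be a prime dividing n with s < p². Then ν_p(n) = 1, and the unique integer d with 1 ≤ d < p and d ≡ n/p (mod p) satisfies d + ⌊s/p⌋ ≥ p. -/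
open Polynomial Finset

/-- g₁(x,n,s) = n!·∑_{j=0}^{n} C(n+s−j, n−j)·x^j/j!, as a polynomial over ℚ. -/
noncomputable def g1 (n s : ℕ) : ℚ[X] :=
  (n.factorial : ℚ[X]) *
    ∑ j ∈ Finset.range (n + 1),
      Polynomial.C (((n + s - j).choose (n - j) : ℚ) / (j.factorial : ℚ)) * Polynomial.X ^ j

/-- Integer coefficients of `g1`. -/
private def bc (n s j : ℕ) : ℕ := (n.factorial / j.factorial) * (n + s - j).choose (n - j)

private lemma bc_cast {n s j : ℕ} (hj : j ≤ n) :
    ((bc n s j : ℚ)) =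
      (n.factorial : ℚ) * (((n + s - j).choose (n - j) : ℚ) / (j.factorial : ℚ)) := by
  have hdvd : j.factorial ∣ n.factorial := Nat.factorial_dvd_factorial hj
  have hne : ((j.factorial : ℚ)) ≠ 0 := by
    exact_mod_cast (Nat.factorial_pos j).ne'
  rw [bc, Nat.cast_mul, Nat.cast_div hdvd hne]
  ring

private noncomputable def Gpoly (n s : ℕ) : ℤ[X] :=
  ∑ j ∈ Finset.range (n + 1), Polynomial.C ((bc n s j : ℤ)) * Polynomial.X ^ j

private lemma Gpoly_map (n s : ℕ) : (Gpoly n s).map (Int.castRingHom ℚ) = g1 n s := by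
  rw [Gpoly, g1, Polynomial.map_sum, Finset.mul_sum]
  refine Finset.sum_congr rfl fun j hj => ?_
  rw [Finset.mem_range] at hj
  have hj' : j ≤ n := by omega
  rw [Polynomial.map_mul, Polynomial.map_C, Polynomial.map_pow, Polynomial.map_X]
  have h1 : ((Int.castRingHom ℚ) ((bc n s j : ℤ))) = ((bc n s j : ℚ)) := by
    simp
  rw [h1, bc_cast hj']
  have h2 : ((n.factorial : ℚ[X])) = Polynomial.C ((n.factorial : ℚ)) := by
    simp
  rw [h2, ← mul_assoc, ← Polynomial.C_mul]

private lemma bc_self (n s : ℕ) : bc n s n = 1 := by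
  simp [bc, Nat.div_self (Nat.factorial_pos n)]

private lemma Gpoly_coeff_n (n s : ℕ) : (Gpoly n s).coeff n = 1 := by
  rw [Gpoly, Polynomial.finset_sum_coeff]
  rw [Finset.sum_eq_single n]
  · simp [bc_self]
  · intro j hj hjn
    simp [Polynomial.coeff_C_mul, Polynomial.coeff_X_pow, Ne.symm hjn]
  · intro h
    exact absurd (Finset.self_mem_range_succ n) h

private lemma Gpoly_monic (n s : ℕ) : (Gpoly n s).Monic := by
  apply Polynomial.monic_of_natDegree_le_of_coeff_eq_one n
  · apply Polynomial.natDegree_sum_le_of_forall_le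
    intro j hj
    rw [Finset.mem_range] at hj
    calc (Polynomial.C ((bc n s j : ℤ)) * Polynomial.X ^ j).natDegree
        ≤ (Polynomial.X ^ j : ℤ[X]).natDegree := Polynomial.natDegree_C_mul_le _ _
      _ ≤ j := Polynomial.natDegree_X_pow_le j
      _ ≤ n := by omega
  · exact Gpoly_coeff_n n s

private lemma digitsum_pos {p j : ℕ} (hj : j ≠ 0) : 1 ≤ (p.digits j).sum := by
  have hne : p.digits j ≠ [] := Nat.digits_ne_nil_iff_ne_zero.mpr hj
  have hlast := Nat.getLast_digit_ne_zero p hj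
  have hmem := List.getLast_mem hne
  calc 1 ≤ (p.digits j).getLast hne := Nat.one_le_iff_ne_zero.mpr hlast
    _ ≤ (p.digits j).sum := List.single_le_sum (fun _ _ => Nat.zero_le _) _ hmem

private lemma padicValNat_factorial_lt {p : ℕ} (hp : p.Prime) {j : ℕ} (hj : 1 ≤ j) :
    padicValNat p j.factorial < j := by
  haveI := Fact.mk hp
  have h := sub_one_mul_padicValNat_factorial (p := p) j
  have h2 := digitsum_pos (p := p) (by omega : j ≠ 0)
  have h3 : padicValNat p j.factorial ≤ (p - 1) * padicValNat p j.factorial :=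
    Nat.le_mul_of_pos_left _ (by have := hp.two_le; omega)
  have h4 := Nat.digit_sum_le p j
  omega

theorem g1_linear_factor_divisor_condition (n s : ℕ) (hn : 1 ≤ n) (hs : 9 ≤ s)
    (hfac : ∃ l q : ℚ[X], l.natDegree = 1 ∧ Irreducible q ∧ g1 n s = l * q)
    (p : ℕ) (hp : p.Prime) (hpn : p ∣ n) (hsp : s < p ^ 2) :
    padicValNat p n = 1 ∧
      ∀ d : ℕ, 1 ≤ d → d < p → (d : ZMod p) = ((n / p : ℕ) : ZMod p) →
        p ≤ d + s / p := by
  haveI := Fact.mk hp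
  -- Step 1: g1 has a rational root
  obtain ⟨l, q, hl, hq, hlq⟩ := hfac
  obtain ⟨a, ha, b, hab⟩ := Polynomial.natDegree_eq_one.mp hl
  set x₀ : ℚ := -b / a with hx₀
  have hlroot : l.eval x₀ = 0 := by
    rw [← hab, hx₀]
    simp only [Polynomial.eval_add, Polynomial.eval_mul, Polynomial.eval_C, Polynomial.eval_X]
    field_simp
    ring
  have hroot : (g1 n s).eval x₀ = 0 := by
    rw [hlq, Polynomial.eval_mul, hlroot, zero_mul]
  -- Step 2: the root is an integer
  have hint : IsIntegral ℤ x₀ := by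
    refine ⟨Gpoly n s, Gpoly_monic n s, ?_⟩
    rw [← Polynomial.eval_map, algebraMap_int_eq, Gpoly_map]
    exact hroot
  obtain ⟨r, hr⟩ := IsIntegrallyClosed.isIntegral_iff.mp hint
  have hr' : ((r : ℚ)) = x₀ := by rw [← hr]; simp
  have hevalG : (Gpoly n s).eval r = 0 := by
    have h1 : (((Gpoly n s).eval r : ℤ) : ℚ) = ((Gpoly n s).map (Int.castRingHom ℚ)).eval (r : ℚ) := by
      rw [Polynomial.eval_map]
      rw [show ((r : ℚ)) = (Int.castRingHom ℚ) r from rfl, Polynomial.eval₂_at_apply]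
      simp
    have h2 : (((Gpoly n s).eval r : ℤ) : ℚ) = 0 := by
      rw [h1, Gpoly_map, hr', hroot]
    exact_mod_cast h2
  have hsum : ∑ j ∈ Finset.range (n + 1), ((bc n s j : ℤ)) * r ^ j = 0 := by
    have heq : (Gpoly n s).eval r = ∑ j ∈ Finset.range (n + 1), ((bc n s j : ℤ)) * r ^ j := by
      rw [Gpoly, Polynomial.eval_finset_sum]
      refine Finset.sum_congr rfl fun j hj => ?_
      rw [Polynomial.eval_mul, Polynomial.eval_C, Polynomial.eval_pow, Polynomial.eval_X]
    rw [← heq]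
    exact hevalG
  -- Step 3: p divides r
  have hbp : ∀ j, j < n → (p : ℕ) ∣ bc n s j := by
    intro j hj
    have hdvd : j.factorial ∣ (n - 1).factorial := Nat.factorial_dvd_factorial (by omega)
    have hfc : n.factorial / j.factorial = n * ((n - 1).factorial / j.factorial) := by
      rw [← Nat.mul_div_assoc _ hdvd, Nat.mul_factorial_pred (by omega)]
    have : p ∣ n.factorial / j.factorial := by
      rw [hfc]; exact Dvd.dvd.mul_right hpn _
    exact this.mul_right _
  have hpr : (p : ℤ) ∣ r := by
    have hsplit := Finset.sum_range_succ (fun j => ((bc n s j : ℤ)) * r ^ j) n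
    rw [hsum] at hsplit
    have hrn : r ^ n = -∑ j ∈ Finset.range n, ((bc n s j : ℤ)) * r ^ j := by
      have : ((bc n s n : ℤ)) = 1 := by rw [bc_self]; simp
      rw [this, one_mul] at hsplit
      linarith [hsplit]
    have hdvd : (p : ℤ) ∣ r ^ n := by
      rw [hrn]
      apply dvd_neg.mpr
      apply Finset.dvd_sum
      intro j hj
      rw [Finset.mem_range] at hj
      exact Dvd.dvd.mul_right (Int.natCast_dvd_natCast.mpr (hbp j hj)) _
    exact (Int.prime_iff_natAbs_prime.mpr (by simpa using hp)).dvd_of_dvd_pow hdvd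
  -- Step 4: p divides the binomial coefficient
  set K := padicValNat p n.factorial with hK
  have hkey : p ∣ (n + s).choose n := by
    by_contra hC
    have hterm : ∀ j ∈ Finset.range n, ((p : ℤ)) ^ (K + 1) ∣ ((bc n s (j + 1) : ℤ)) * r ^ (j + 1) := by
      intro j hj
      rw [Finset.mem_range] at hj
      have hj1 : j + 1 ≤ n := hj
      have hνj : padicValNat p (j + 1).factorial < j + 1 := padicValNat_factorial_lt hp (by omega)
      have hdvdfac : (j + 1).factorial ∣ n.factorial := Nat.factorial_dvd_factorial hj1
      have hν : padicValNat p (n.factorial / (j + 1).factorial) =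
          K - padicValNat p (j + 1).factorial := padicValNat.div_of_dvd hdvdfac
      have hKsplit : K = padicValNat p (n.factorial / (j + 1).factorial) +
          padicValNat p (j + 1).factorial := by
        have hdivne : n.factorial / (j + 1).factorial ≠ 0 :=
          (Nat.div_pos (Nat.factorial_le hj1) (Nat.factorial_pos _)).ne'
        rw [hK]
        conv_lhs => rw [← Nat.div_mul_cancel hdvdfac]
        rw [padicValNat.mul hdivne (Nat.factorial_ne_zero _)]
      have h1 : p ^ (K - padicValNat p (j + 1).factorial) ∣ n.factorial / (j + 1).factorial :=
        hν ▸ pow_padicValNat_dvd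
      have h1' : (p : ℤ) ^ (K - padicValNat p (j + 1).factorial) ∣ ((bc n s (j + 1) : ℤ)) := by
        have : p ^ (K - padicValNat p (j + 1).factorial) ∣ bc n s (j + 1) := h1.mul_right _
        exact_mod_cast Int.natCast_dvd_natCast.mpr this
      have h2 : (p : ℤ) ^ (j + 1) ∣ r ^ (j + 1) := pow_dvd_pow_of_dvd hpr _
      have h3 := mul_dvd_mul h1' h2
      rw [← pow_add] at h3
      exact dvd_trans (pow_dvd_pow _ (by omega)) h3
    have hdvd0 : ((p : ℤ)) ^ (K + 1) ∣ ((bc n s 0 : ℤ)) := by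
      have hsplit := Finset.sum_range_succ' (fun j => ((bc n s j : ℤ)) * r ^ j) n
      rw [hsum] at hsplit
      have h0 : ((bc n s 0 : ℤ)) = -∑ j ∈ Finset.range n, ((bc n s (j + 1) : ℤ)) * r ^ (j + 1) := by
        have : ((bc n s 0 : ℤ)) * r ^ 0 = ((bc n s 0 : ℤ)) := by ring
        rw [this] at hsplit
        linarith [hsplit]
      rw [h0]
      exact dvd_neg.mpr (Finset.dvd_sum hterm)
    have hdvd0' : p ^ (K + 1) ∣ bc n s 0 := by
      have := hdvd0
      rw [show ((p : ℤ)) ^ (K + 1) = ((p ^ (K + 1) : ℕ) : ℤ) by push_cast; ring] at this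
      exact_mod_cast this
    have hb0 : bc n s 0 = n.factorial * (n + s).choose n := by
      simp [bc]
    have hb0ne : bc n s 0 ≠ 0 := by
      rw [hb0]
      exact Nat.mul_ne_zero (Nat.factorial_ne_zero n)
        (Nat.choose_pos (Nat.le_add_right n s)).ne'
    have hνb0 : padicValNat p (bc n s 0) = K := by
      rw [hb0, padicValNat.mul (Nat.factorial_ne_zero n)
        (Nat.choose_pos (Nat.le_add_right n s)).ne', padicValNat.eq_zero_of_not_dvd hC, add_zero]
    have := (padicValNat_dvd_iff_le hb0ne).mp hdvd0'
    omega
  -- Step 5: Kummer's theorem gives a carry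
  have hkey' : 1 ≤ padicValNat p ((s + n).choose n) := by
    apply one_le_padicValNat_of_dvd (Nat.choose_pos (Nat.le_add_left n s)).ne'
    rwa [add_comm s n]
  rw [padicValNat_choose' (b := Nat.log p (s + n) + 1) (Nat.lt_succ_self _)] at hkey'
  have hnonempty : ((Finset.Ico 1 (Nat.log p (s + n) + 1)).filter
      fun i => p ^ i ≤ n % p ^ i + s % p ^ i).Nonempty := Finset.card_pos.mp (by omega)
  obtain ⟨i, hi⟩ := hnonempty
  rw [Finset.mem_filter, Finset.mem_Ico] at hi
  obtain ⟨⟨hi1, _⟩, hcar⟩ := hi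
  have hppos : 0 < p := hp.pos
  have hnmodp : n % p = 0 := Nat.mod_eq_zero_of_dvd hpn
  have hi2 : 2 ≤ i := by
    by_contra h
    have : i = 1 := by omega
    subst this
    rw [pow_one, hnmodp, zero_add] at hcar
    have := Nat.mod_lt s hppos
    omega
  -- Claim A: p^2 ≤ n % p^2 + s
  have hple : p ^ 2 ≤ p ^ i := Nat.pow_le_pow_right hppos hi2
  have hsmod : s % p ^ i = s := Nat.mod_eq_of_lt (lt_of_lt_of_le hsp hple)
  rw [hsmod] at hcar
  have claimA : p ^ 2 ≤ n % p ^ 2 + s := by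
    have hBA : p ^ 2 ∣ p ^ i := pow_dvd_pow p hi2
    have hmm : n % p ^ i % p ^ 2 = n % p ^ 2 := Nat.mod_mod_of_dvd n hBA
    have hdm : p ^ 2 * (n % p ^ i / p ^ 2) + n % p ^ i % p ^ 2 = n % p ^ i :=
      Nat.div_add_mod (n % p ^ i) (p ^ 2)
    rw [hmm] at hdm
    have hq' : n % p ^ i / p ^ 2 < p ^ i / p ^ 2 :=
      Nat.div_lt_div_of_lt_of_dvd hBA (Nat.mod_lt n (by positivity))
    have hq2 : p ^ 2 * (n % p ^ i / p ^ 2) + p ^ 2 ≤ p ^ i := by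
      have h1 : p ^ 2 * (n % p ^ i / p ^ 2 + 1) ≤ p ^ 2 * (p ^ i / p ^ 2) :=
        Nat.mul_le_mul_left _ (by omega)
      rw [Nat.mul_div_cancel' hBA] at h1
      rw [Nat.mul_add, Nat.mul_one] at h1
      exact h1
    generalize hX : p ^ 2 * (n % p ^ i / p ^ 2) = X at hdm hq2
    omega
  -- Conclusion 1
  have hnp2 : ¬ p ^ 2 ∣ n := by
    intro h
    have : n % p ^ 2 = 0 := Nat.mod_eq_zero_of_dvd h
    omega
  have hval1 : padicValNat p n = 1 := by
    have h1 : 1 ≤ padicValNat p n := one_le_padicValNat_of_dvd (by omega) hpn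
    have h2 : padicValNat p n < 2 := by
      by_contra h
      push_neg at h
      exact hnp2 ((pow_dvd_pow p h).trans pow_padicValNat_dvd)
    omega
  refine ⟨hval1, ?_⟩
  intro d hd1 hdp hdmod
  have hmodeq : d % p = (n / p) % p := (ZMod.natCast_eq_natCast_iff' d (n / p) p).mp hdmod
  have hd : d = (n / p) % p := by
    rw [← Nat.mod_eq_of_lt hdp, hmodeq]
  have hnp2' : n % p ^ 2 = ((n / p) % p) * p := by
    conv_lhs => rw [← Nat.div_mul_cancel hpn]
    rw [pow_two, Nat.mul_mod_mul_right]
  rw [hnp2', ← hd] at claimA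
  have hsub : (p - d) * p ≤ s := by
    rw [pow_two] at claimA
    rw [Nat.sub_mul]
    generalize hX : d * p = X at claimA ⊢
    generalize hY : p * p = Y at claimA ⊢
    omega
  have hdiv : p - d ≤ s / p := (Nat.le_div_iff_mul_le hppos).mpr hsub
  omega
end

section
/- Let n be a positive integer, s a non-negative integer, and p a prime dividing n·(s+1). If ν_p(C(n+s,s)) = 0, then g₁(x) = g₁(x,n,s) has no factor of degree 1 in ℚ[x]. -/
open Polynomial Finset

/-- The integer coefficients of `g1`. -/
def g1a (n s j : ℕ) : ℕ := n.descFactorial (n - j) * (n + s - j).choose (n - j)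

lemma g1a_mul_factorial {n s j : ℕ} (hj : j ≤ n) :
    g1a n s j * j.factorial = n.factorial * (n + s - j).choose (n - j) := by
  have h1 : (n - (n - j)).factorial * n.descFactorial (n - j) = n.factorial :=
    Nat.factorial_mul_descFactorial (Nat.sub_le n j)
  rw [Nat.sub_sub_self hj] at h1
  calc g1a n s j * j.factorial
      = (j.factorial * n.descFactorial (n - j)) * (n + s - j).choose (n - j) := by
        rw [g1a]; ring
    _ = n.factorial * (n + s - j).choose (n - j) := by rw [h1]

lemma g1a_ne_zero {n s j : ℕ} (hj : j ≤ n) : g1a n s j ≠ 0 := by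
  have h1 : n.descFactorial (n - j) ≠ 0 := by
    intro h
    exact absurd (Nat.descFactorial_eq_zero_iff_lt.mp h) (by omega)
  have h2 : (n + s - j).choose (n - j) ≠ 0 := (Nat.choose_pos (by omega)).ne'
  exact Nat.mul_ne_zero h1 h2

lemma g1a_self (n s : ℕ) : g1a n s n = 1 := by
  simp [g1a]

/-- `ν_p(j!) < j` for `j ≥ 1`. -/
lemma factorization_factorial_lt {p : ℕ} (hp : p.Prime) {j : ℕ} (hj : 1 ≤ j) :
    (j.factorial).factorization p < j := by
  haveI : Fact p.Prime := ⟨hp⟩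
  have h := sub_one_mul_padicValNat_factorial (p := p) j
  have hne : p.digits j ≠ [] := Nat.digits_ne_nil_iff_ne_zero.mpr (by omega)
  have hlast := Nat.getLast_digit_ne_zero p (show j ≠ 0 by omega)
  have hmem : (p.digits j).getLast hne ∈ p.digits j := List.getLast_mem hne
  have hds : 1 ≤ (p.digits j).sum := by
    have := List.single_le_sum (fun x _ => Nat.zero_le x) _ hmem
    omega
  have hp2 := hp.two_le
  have hmul : padicValNat p j.factorial ≤ (p - 1) * padicValNat p j.factorial :=
    Nat.le_mul_of_pos_left _ (by omega)
  have hjle : j.factorial ≥ 1 := Nat.one_le_iff_ne_zero.mpr j.factorial_ne_zero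
  have hsum_le : (p.digits j).sum ≤ j := Nat.digit_sum_le p j
  rw [Nat.factorization_def _ hp]
  omega

theorem g1_no_linear_factor_of_u_eq_zero (n s : ℕ) (hn : 1 ≤ n)
    (p : ℕ) (hp : p.Prime) (hpdvd : p ∣ n * (s + 1))
    (hu : padicValNat p ((n + s).choose s) = 0) :
    ¬ ∃ q : ℚ[X], q.natDegree = 1 ∧ q ∣ g1 n s := by
  rintro ⟨q, hq1, t, hqt⟩
  haveI : Fact p.Prime := ⟨hp⟩
  -- p does not divide the binomial coefficient
  have hCpos : 0 < (n + s).choose s := Nat.choose_pos (Nat.le_add_left s n)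
  have hC : ¬ p ∣ (n + s).choose s := by
    rcases padicValNat.eq_zero_iff.mp hu with h | h | h
    · exact absurd h hp.ne_one
    · omega
    · exact h
  -- p divides n
  have hpn : p ∣ n := by
    rcases (Nat.Prime.dvd_mul hp).mp hpdvd with h | h
    · exact h
    · have key : (n + s).choose (s + 1) * (s + 1) = (n + s).choose s * n := by
        have := Nat.choose_succ_right_eq (n + s) s
        simpa using this
      have : p ∣ (n + s).choose s * n := key ▸ Dvd.dvd.mul_left h _
      rcases (Nat.Prime.dvd_mul hp).mp this with h' | h'
      · exact absurd h' hC
      · exact h'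
  -- the integer polynomial
  set G : ℤ[X] := ∑ j ∈ Finset.range (n + 1), C ((g1a n s j : ℤ)) * X ^ j with hG
  have hmap : G.map (algebraMap ℤ ℚ) = g1 n s := by
    rw [hG, g1, Polynomial.map_sum]
    rw [show ((n.factorial : ℚ[X])) = C ((n.factorial : ℚ)) from (Polynomial.C_eq_natCast _).symm, Finset.mul_sum]
    refine Finset.sum_congr rfl fun j hj => ?_
    have hj' : j ≤ n := Nat.lt_succ_iff.mp (Finset.mem_range.mp hj)
    rw [Polynomial.map_mul, Polynomial.map_pow, Polynomial.map_C, Polynomial.map_X,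
      ← mul_assoc, ← C_mul]
    have hcast : ((g1a n s j : ℚ)) = (n.factorial : ℚ) *
        (((n + s - j).choose (n - j) : ℚ) / (j.factorial : ℚ)) := by
      rw [mul_div_assoc',
        eq_div_iff (show (j.factorial : ℚ) ≠ 0 from Nat.cast_ne_zero.mpr j.factorial_ne_zero)]
      exact_mod_cast g1a_mul_factorial hj'
    rw [algebraMap_int_eq, Int.coe_castRingHom]
    push_cast
    rw [hcast]
  have hGcoeff : G.coeff n = 1 := by
    rw [hG, Polynomial.finset_sum_coeff]
    rw [Finset.sum_eq_single n]
    · simp [coeff_C_mul, coeff_X_pow, g1a_self]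
    · intro j hj hjn
      simp [coeff_C_mul, coeff_X_pow, (Ne.symm hjn)]
    · intro h
      exact absurd (Finset.self_mem_range_succ n) h
  have hGmonic : G.Monic := by
    apply Polynomial.monic_of_natDegree_le_of_coeff_eq_one n _ hGcoeff
    apply Polynomial.natDegree_sum_le_of_forall_le
    intro j hj
    exact (Polynomial.natDegree_C_mul_X_pow_le _ _).trans
      (Nat.lt_succ_iff.mp (Finset.mem_range.mp hj))
  -- the rational root
  obtain ⟨c, hc0, b, hqform⟩ := Polynomial.natDegree_eq_one.mp hq1
  set r : ℚ := -b / c with hr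
  have hqr : q.eval r = 0 := by
    rw [← hqform]
    simp only [eval_add, eval_mul, eval_C, eval_X, hr]
    field_simp
    ring
  have hroot : (g1 n s).eval r = 0 := by
    rw [hqt, eval_mul, hqr, zero_mul]
  -- r is an integer
  have hint : IsIntegral ℤ r := by
    refine ⟨G, hGmonic, ?_⟩
    rw [Polynomial.eval₂_eq_eval_map, hmap]
    exact hroot
  obtain ⟨m, hm⟩ := IsIntegrallyClosed.isIntegral_iff.mp hint
  have hevalG : G.eval m = 0 := by
    have h1 : Polynomial.aeval r G = 0 := by
      rw [Polynomial.aeval_def, Polynomial.eval₂_eq_eval_map, hmap]; exact hroot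
    rw [← hm, Polynomial.aeval_algebraMap_apply_eq_algebraMap_eval, algebraMap_int_eq,
      eq_intCast] at h1
    exact_mod_cast h1
  have hS : ∑ j ∈ Finset.range (n + 1), (g1a n s j : ℤ) * m ^ j = 0 := by
    rw [← hevalG, hG, Polynomial.eval_finset_sum]
    simp [eval_mul, eval_pow]
  -- p divides a_j for j < n
  have hpa : ∀ j < n, (p : ℤ) ∣ (g1a n s j : ℤ) := by
    intro j hjn
    have hnd : n ∣ n.descFactorial (n - j) := by
      obtain ⟨n', rfl⟩ : ∃ n', n = n' + 1 := ⟨n - 1, by omega⟩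
      obtain ⟨k, hk⟩ : ∃ k, n' + 1 - j = k + 1 := ⟨n' - j, by omega⟩
      rw [hk, Nat.succ_descFactorial_succ]
      exact Dvd.intro _ rfl
    have : p ∣ g1a n s j := dvd_trans hpn (hnd.mul_right _)
    exact_mod_cast this
  by_cases hpm : (p : ℤ) ∣ m
  · -- case p ∣ m : the j = 0 term has valuation exactly ν_p(n!)
    set N : ℕ := (n.factorial).factorization p with hN
    have hdvd_term : ∀ j, 1 ≤ j → j ≤ n → (p : ℤ) ^ (N + 1) ∣ (g1a n s j : ℤ) * m ^ j := by
      intro j hj1 hjn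
      set v : ℕ := (j.factorial).factorization p with hv
      have hvj : v < j := factorization_factorial_lt hp hj1
      have hvN : v ≤ N := by
        have hdvd : p ^ v ∣ n.factorial :=
          dvd_trans (Nat.ordProj_dvd _ _) (Nat.factorial_dvd_factorial hjn)
        exact (Nat.Prime.pow_dvd_iff_le_factorization hp n.factorial_ne_zero).mp hdvd
      -- p^(N - v) ∣ a_j
      have hfa : N ≤ (g1a n s j).factorization p + v := by
        have hid := g1a_mul_factorial (s := s) hjn
        have h1 : (g1a n s j * j.factorial).factorization p
            = (g1a n s j).factorization p + v := by
          rw [Nat.factorization_mul (g1a_ne_zero hjn) j.factorial_ne_zero]; rfl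
        have h2 : (n.factorial * (n + s - j).choose (n - j)).factorization p
            = N + ((n + s - j).choose (n - j)).factorization p := by
          rw [Nat.factorization_mul n.factorial_ne_zero (Nat.choose_pos (by omega)).ne']
          rfl
        have := congrArg (fun x => x.factorization p) hid
        simp only [h1, h2] at this
        omega
      have hdvda : (p : ℤ) ^ (N - v) ∣ (g1a n s j : ℤ) := by
        have : p ^ (N - v) ∣ g1a n s j := by
          apply (Nat.Prime.pow_dvd_iff_le_factorization hp (g1a_ne_zero hjn)).mpr
          omega
        exact_mod_cast this
      have hdvdm : (p : ℤ) ^ j ∣ m ^ j := pow_dvd_pow_of_dvd hpm j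
      have : (p : ℤ) ^ (N - v + j) ∣ (g1a n s j : ℤ) * m ^ j := by
        rw [pow_add]; exact mul_dvd_mul hdvda hdvdm
      exact dvd_trans (pow_dvd_pow _ (by omega)) this
    -- the sum gives p^(N+1) ∣ a_0
    have hdvd0 : (p : ℤ) ^ (N + 1) ∣ (g1a n s 0 : ℤ) := by
      have hsplit := Finset.sum_range_succ' (fun j => (g1a n s j : ℤ) * m ^ j) n
      rw [hsplit] at hS
      have h0 : (g1a n s 0 : ℤ) * m ^ 0 = -∑ i ∈ Finset.range n, (g1a n s (i+1) : ℤ) * m ^ (i+1) := by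
        linarith [hS]
      have hdvdsum : (p : ℤ) ^ (N + 1) ∣ ∑ i ∈ Finset.range n, (g1a n s (i+1) : ℤ) * m ^ (i+1) :=
        Finset.dvd_sum fun i hi =>
          hdvd_term (i+1) (Nat.le_add_left 1 i) (Nat.succ_le_of_lt (Finset.mem_range.mp hi))
      have : (p : ℤ) ^ (N + 1) ∣ (g1a n s 0 : ℤ) * m ^ 0 := h0 ▸ hdvdsum.neg_right
      simpa using this
    have hdvd0' : p ^ (N + 1) ∣ g1a n s 0 := by exact_mod_cast hdvd0
    -- but ν_p(a_0) = N
    have hfa0 : (g1a n s 0).factorization p = N := by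
      have h0 : g1a n s 0 = n.factorial * (n + s).choose n := by
        simp [g1a, Nat.descFactorial_self]
      have hcs : (n + s).choose n = (n + s).choose s := Nat.choose_symm_add
      have hCfact : ((n + s).choose s).factorization p = 0 := by
        rw [Nat.factorization_def _ hp, hu]
      rw [h0, Nat.factorization_mul n.factorial_ne_zero (by omega), hcs]
      simp [hCfact, hN]
    have := (Nat.Prime.pow_dvd_iff_le_factorization hp (g1a_ne_zero (Nat.zero_le n))).mp hdvd0'
    omega
  · -- case p ∤ m : reduce mod p, the leading term survives
    have hsplit := Finset.sum_range_succ (fun j => (g1a n s j : ℤ) * m ^ j) n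
    rw [hsplit] at hS
    have hdvdsum : (p : ℤ) ∣ ∑ j ∈ Finset.range n, (g1a n s j : ℤ) * m ^ j :=
      Finset.dvd_sum fun j hj => ((hpa j (Finset.mem_range.mp hj)).mul_right _)
    have hlead : (p : ℤ) ∣ (g1a n s n : ℤ) * m ^ n := by
      have : (g1a n s n : ℤ) * m ^ n = -∑ j ∈ Finset.range n, (g1a n s j : ℤ) * m ^ j := by
        linarith [hS]
      rw [this]
      exact hdvdsum.neg_right
    rw [g1a_self] at hlead
    simp only [Nat.cast_one, one_mul] at hlead
    have hpZ : Prime (p : ℤ) := Nat.prime_iff_prime_int.mp hp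
    exact hpm (hpZ.dvd_of_dvd_pow hlead)
end

section
/- Let n be a positive integer, s a non-negative integer, and p a prime with p > 2 and p | n·(s+1). Set u = ν_p(C(n+s,s)) and let z₀ be the unique integer with 1 ≤ z₀ < p and z₀ ≡ n+s (mod p). If u > 0, (u+1)/p < 1 and (ν_p(n+s−z₀) − ν_p(n))/(z₀+1) < 1, then g₁(x) = g₁(x,n,s) has no factor of degree 1 in ℚ[x]. -/
open Polynomial Finset

namespace G1Aux

/-- The integer coefficients of `g1`. -/
def A (n s j : ℕ) : ℕ := n.choose j * ∏ k ∈ Finset.range (n - j), (s + 1 + k)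

lemma prod_range_mul_factorial (s i : ℕ) :
    (∏ k ∈ Finset.range i, (s + 1 + k)) * s.factorial = (s + i).factorial := by
  induction i with
  | zero => simp
  | succ i ih =>
    rw [Finset.prod_range_succ, mul_right_comm, ih]
    have h : s + (i + 1) = (s + i) + 1 := by omega
    rw [h, Nat.factorial_succ]
    ring

lemma A_pos {n j : ℕ} (s : ℕ) (h : j ≤ n) : 0 < A n s j := by
  refine Nat.mul_pos (Nat.choose_pos h) (Finset.prod_pos fun k _ => by omega)

lemma A_last (n s : ℕ) : A n s n = 1 := by simp [A]

lemma A_key (n s j : ℕ) (h : j ≤ n) :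
    A n s j * j.factorial * (n - j).factorial * s.factorial
      = n.factorial * (n + s - j).factorial := by
  have h1 : A n s j * s.factorial = n.choose j * (n + s - j).factorial := by
    have := prod_range_mul_factorial s (n - j)
    have hs : s + (n - j) = n + s - j := by omega
    rw [hs] at this
    rw [A, mul_assoc, this]
  calc A n s j * j.factorial * (n - j).factorial * s.factorial
      = (A n s j * s.factorial) * j.factorial * (n - j).factorial := by ring
    _ = n.choose j * (n + s - j).factorial * j.factorial * (n - j).factorial := by rw [h1]
    _ = (n.choose j * j.factorial * (n - j).factorial) * (n + s - j).factorial := by ring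
    _ = n.factorial * (n + s - j).factorial := by
        rw [Nat.choose_mul_factorial_mul_factorial h]

/-- The polynomial with the `A`-coefficients over ℤ. -/
noncomputable def G (n s : ℕ) : ℤ[X] :=
  ∑ j ∈ Finset.range (n + 1), Polynomial.C (A n s j : ℤ) * Polynomial.X ^ j

lemma coeff_eqQ (n s j : ℕ) (h : j ≤ n) :
    (n.factorial : ℚ) * (((n + s - j).choose (n - j) : ℚ) / (j.factorial : ℚ))
      = (A n s j : ℚ) := by
  have hj : (j.factorial : ℚ) ≠ 0 := by exact_mod_cast (Nat.factorial_pos j).ne'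
  have hC : n.factorial * (n + s - j).choose (n - j) = A n s j * j.factorial := by
    have hpos : 0 < (n - j).factorial * s.factorial :=
      Nat.mul_pos (Nat.factorial_pos _) (Nat.factorial_pos _)
    apply Nat.eq_of_mul_eq_mul_right hpos
    have hle : n - j ≤ n + s - j := by omega
    have hsub : (n + s - j) - (n - j) = s := by omega
    calc n.factorial * (n + s - j).choose (n - j) * ((n - j).factorial * s.factorial)
        = n.factorial * ((n + s - j).choose (n - j) * (n - j).factorial
            * ((n + s - j) - (n - j)).factorial) := by rw [hsub]; ring
      _ = n.factorial * (n + s - j).factorial := by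
            rw [Nat.choose_mul_factorial_mul_factorial hle]
      _ = A n s j * j.factorial * ((n - j).factorial * s.factorial) := by
            rw [← A_key n s j h]; ring
  rw [mul_div_assoc', div_eq_iff hj]
  exact_mod_cast hC

lemma g1_eq_map (n s : ℕ) : g1 n s = (G n s).map (Int.castRingHom ℚ) := by
  rw [g1, G, Polynomial.map_sum, Finset.mul_sum]
  refine Finset.sum_congr rfl fun j hj => ?_
  have hjn : j ≤ n := by simpa using Nat.lt_succ_iff.mp (Finset.mem_range.mp hj)
  rw [Polynomial.map_mul, Polynomial.map_pow, Polynomial.map_X, Polynomial.map_C]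
  have : (n.factorial : ℚ[X]) = Polynomial.C (n.factorial : ℚ) := by
    simp
  rw [this, ← mul_assoc, ← Polynomial.C_mul, coeff_eqQ n s j hjn]
  norm_num

lemma coeff_G (n s k : ℕ) : (G n s).coeff k = if k ≤ n then (A n s k : ℤ) else 0 := by
  rw [G]
  simp only [Polynomial.C_mul_X_pow_eq_monomial, Polynomial.finset_sum_coeff,
    Polynomial.coeff_monomial]
  rw [Finset.sum_ite_eq' (Finset.range (n+1)) k (fun j => (A n s j : ℤ))]
  simp [Nat.lt_succ_iff]

lemma G_monic (n s : ℕ) : (G n s).Monic := by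
  apply Polynomial.monic_of_natDegree_le_of_coeff_eq_one n
  · apply Polynomial.natDegree_sum_le_of_forall_le
    intro i hi
    exact le_trans (Polynomial.natDegree_C_mul_X_pow_le _ _)
      (Nat.lt_succ_iff.mp (Finset.mem_range.mp hi))
  · rw [coeff_G, if_pos le_rfl, A_last]; norm_num

lemma G_eval (n s : ℕ) (m : ℤ) :
    (G n s).eval m = ∑ j ∈ Finset.range (n + 1), (A n s j : ℤ) * m ^ j := by
  rw [G, Polynomial.eval_finset_sum]
  simp


section Valuation

lemma nu_le_of_dvd {p : ℕ} (hp : p.Prime) {a b : ℕ} (hb : b ≠ 0) (h : a ∣ b) :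
    padicValNat p a ≤ padicValNat p b := by
  haveI := Fact.mk hp
  exact (padicValNat_dvd_iff_le hb).mp (dvd_trans pow_padicValNat_dvd h)

lemma nu_fact_step {p : ℕ} (hp : p.Prime) {t : ℕ} (ht : 1 ≤ t) :
    padicValNat p t.factorial = padicValNat p t + padicValNat p (t - 1).factorial := by
  haveI := Fact.mk hp
  have h : t.factorial = t * (t - 1).factorial := by
    obtain ⟨t', rfl⟩ : ∃ t', t = t' + 1 := ⟨t - 1, by omega⟩
    simp [Nat.factorial_succ]
  rw [h, padicValNat.mul (by omega) (Nat.factorial_pos _).ne']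

lemma nu_choose_add {p : ℕ} (hp : p.Prime) (a b : ℕ) :
    padicValNat p ((a + b).choose b) + padicValNat p b.factorial + padicValNat p a.factorial
      = padicValNat p (a + b).factorial := by
  haveI := Fact.mk hp
  have h := Nat.choose_mul_factorial_mul_factorial (Nat.le_add_left b a)
  have hs : a + b - b = a := by omega
  rw [hs] at h
  have hC : (a + b).choose b ≠ 0 := (Nat.choose_pos (Nat.le_add_left b a)).ne'
  have := congrArg (padicValNat p) h
  rwa [padicValNat.mul (mul_ne_zero hC (Nat.factorial_pos _).ne') (Nat.factorial_pos _).ne',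
    padicValNat.mul hC (Nat.factorial_pos _).ne'] at this

lemma legendre_bound {p : ℕ} (hp : p.Prime) {j : ℕ} (hj : 1 ≤ j) :
    (p - 1) * padicValNat p j.factorial ≤ j - 1 := by
  haveI := Fact.mk hp
  rw [sub_one_mul_padicValNat_factorial]
  have hne : p.digits j ≠ [] := Nat.digits_ne_nil_iff_ne_zero.mpr (by omega)
  have hlast := Nat.getLast_digit_ne_zero p (show j ≠ 0 by omega)
  have hmem := List.getLast_mem hne
  have h1 : 1 ≤ (p.digits j).sum := by
    calc 1 ≤ (p.digits j).getLast hne := Nat.one_le_iff_ne_zero.mpr hlast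
      _ ≤ (p.digits j).sum := List.le_sum_of_mem hmem
  omega

lemma not_dvd_sub {p n s z₀ i : ℕ} (hz₀p : z₀ < p) (hmod : z₀ ≡ n + s [MOD p])
    (hip : i < p) (hiz : i ≠ z₀) (hiN : i ≤ n + s) : ¬ p ∣ (n + s - i) := by
  intro hdvd
  have h2 : i ≡ n + s [MOD p] := (Nat.modEq_iff_dvd' hiN).mpr hdvd
  have h3 : i ≡ z₀ [MOD p] := h2.trans hmod.symm
  rw [Nat.ModEq, Nat.mod_eq_of_lt hip, Nat.mod_eq_of_lt hz₀p] at h3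
  exact hiz h3

lemma D1 {p : ℕ} (hp : p.Prime) {n s z₀ : ℕ} (hz₀p : z₀ < p)
    (hmod : z₀ ≡ n + s [MOD p]) :
    ∀ i, i ≤ n → i ≤ z₀ →
      padicValNat p (n + s - i).factorial = padicValNat p (n + s).factorial := by
  intro i
  induction i with
  | zero => simp
  | succ i ih =>
    intro hin hiz
    have hnd : ¬ p ∣ (n + s - i) :=
      not_dvd_sub hz₀p hmod (by omega) (by omega) (by omega)
    have hstep := nu_fact_step hp (t := n + s - i) (by omega)
    have he : n + s - i - 1 = n + s - (i + 1) := by omega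
    rw [he] at hstep
    rw [← ih (by omega) (by omega), hstep, padicValNat.eq_zero_of_not_dvd hnd, zero_add]

lemma D2 {p : ℕ} (hp : p.Prime) {n s z₀ : ℕ} (hz₀p : z₀ < p)
    (hmod : z₀ ≡ n + s [MOD p]) :
    ∀ i, z₀ < i → i ≤ n → i < p →
      padicValNat p (n + s - i).factorial + padicValNat p (n + s - z₀)
        = padicValNat p (n + s).factorial := by
  intro i
  induction i with
  | zero => omega
  | succ i ih =>
    intro hzi hin hip
    by_cases hc : z₀ < i
    · have hnd : ¬ p ∣ (n + s - i) :=
        not_dvd_sub hz₀p hmod (by omega) (by omega) (by omega)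
      have hstep := nu_fact_step hp (t := n + s - i) (by omega)
      have he : n + s - i - 1 = n + s - (i + 1) := by omega
      rw [he] at hstep
      have := ih hc (by omega) (by omega)
      rw [hstep, padicValNat.eq_zero_of_not_dvd hnd, zero_add] at this
      exact this
    · have hiz : i = z₀ := by omega
      subst hiz
      have hstep := nu_fact_step hp (t := n + s - i) (by omega)
      have he : n + s - i - 1 = n + s - (i + 1) := by omega
      rw [he] at hstep
      have hD1 := D1 hp hz₀p hmod i (by omega) le_rfl
      omega

lemma dvd_choose_small {p n i : ℕ} (hp : p.Prime) (hn : 1 ≤ n) (hdvd : p ∣ n)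
    (hi1 : 1 ≤ i) (hip : i < p) : p ∣ n.choose i := by
  have key : n * (n - 1).choose (i - 1) = n.choose i * i := by
    have h := Nat.add_one_mul_choose_eq (n - 1) (i - 1)
    have e1 : n - 1 + 1 = n := by omega
    have e2 : i - 1 + 1 = i := by omega
    rw [e1, e2] at h
    exact h
  have hpd : p ∣ n.choose i * i := key ▸ Dvd.dvd.mul_right hdvd _
  rcases (Nat.Prime.dvd_mul hp).mp hpd with h | h
  · exact h
  · exact absurd (Nat.le_of_dvd (by omega) h) (by omega)

lemma A_dvd {p n s j : ℕ} (hp : p.Prime) (hn : 1 ≤ n) (hpdvd : p ∣ n * (s + 1))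
    (hj : j < n) : p ∣ A n s j := by
  rcases (Nat.Prime.dvd_mul hp).mp hpdvd with h | h
  · by_cases hip : n - j < p
    · have hcs : n.choose j = n.choose (n - j) := (Nat.choose_symm (le_of_lt hj)).symm
      have hd := dvd_choose_small hp hn h (i := n - j) (by omega) hip
      rw [A, hcs]
      exact Dvd.dvd.mul_right hd _
    · set k := (p - (s + 1) % p) % p with hk
      have hp0 : 0 < p := hp.pos
      have hkdvd : p ∣ (s + 1 + k) := by
        have hr := Nat.mod_add_div (s + 1) p
        have hrp : (s + 1) % p < p := Nat.mod_lt _ hp0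
        by_cases hr0 : (s + 1) % p = 0
        · have hk0 : k = 0 := by
            rw [hk, hr0, Nat.sub_zero, Nat.mod_self]
          rw [hk0, Nat.add_zero]
          exact Nat.dvd_of_mod_eq_zero hr0
        · have hkeq : k = p - (s + 1) % p := by
            rw [hk]; exact Nat.mod_eq_of_lt (by omega)
          have hEq : s + 1 + k = p * ((s + 1) / p) + p := by omega
          rw [hEq]
          exact ⟨(s + 1) / p + 1, by ring⟩
      have hkmem : k ∈ Finset.range (n - j) := by
        refine Finset.mem_range.mpr ?_
        have : k < p := Nat.mod_lt _ hp0
        omega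
      exact Dvd.dvd.mul_left (dvd_trans hkdvd (Finset.dvd_prod_of_mem _ hkmem)) _
  · have h0 : (0 : ℕ) ∈ Finset.range (n - j) := Finset.mem_range.mpr (by omega)
    have hd : (s + 1 + 0) ∣ ∏ k ∈ Finset.range (n - j), (s + 1 + k) :=
      Finset.dvd_prod_of_mem _ h0
    exact Dvd.dvd.mul_left (dvd_trans (by simpa using h) hd) _

lemma lemmaB {n s p z₀ : ℕ} (hn : 1 ≤ n) (hp : p.Prime) (hp2 : 2 < p)
    (hz₀1 : 1 ≤ z₀) (hz₀p : z₀ < p) (hmod : z₀ ≡ n + s [MOD p])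
    (hu : padicValNat p ((n + s).choose s) + 1 < p)
    (he : padicValNat p (n + s - z₀) ≤ z₀ + padicValNat p n)
    {j : ℕ} (hj1 : 1 ≤ j) (hjn : j ≤ n) :
    padicValNat p (A n s 0) + 1 ≤ padicValNat p (A n s j) + j := by
  haveI := Fact.mk hp
  have hA0 : A n s 0 ≠ 0 := (A_pos s (by omega)).ne'
  have hAj : A n s j ≠ 0 := (A_pos s hjn).ne'
  have hfj : j.factorial ≠ 0 := (Nat.factorial_pos _).ne'
  have hfnj : (n - j).factorial ≠ 0 := (Nat.factorial_pos _).ne'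
  have hfs : s.factorial ≠ 0 := (Nat.factorial_pos _).ne'
  have hfn : n.factorial ≠ 0 := (Nat.factorial_pos _).ne'
  have hfNj : (n + s - j).factorial ≠ 0 := (Nat.factorial_pos _).ne'
  have E0 : padicValNat p (A n s 0) + padicValNat p s.factorial
      = padicValNat p (n + s).factorial := by
    have h0 : A n s 0 * s.factorial = (n + s).factorial := by
      have h := prod_range_mul_factorial s n
      have hc : s + n = n + s := by omega
      rw [hc] at h
      simpa [A] using h
    rw [← padicValNat.mul hA0 hfs, h0]
  have Ej : padicValNat p (A n s j) + padicValNat p j.factorial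
      + padicValNat p (n - j).factorial + padicValNat p s.factorial
      = padicValNat p n.factorial + padicValNat p (n + s - j).factorial := by
    have h := congrArg (padicValNat p) (A_key n s j hjn)
    rwa [padicValNat.mul (mul_ne_zero (mul_ne_zero hAj hfj) hfnj) hfs,
      padicValNat.mul (mul_ne_zero hAj hfj) hfnj,
      padicValNat.mul hAj hfj,
      padicValNat.mul hfn hfNj] at h
  have E4 : padicValNat p (n.choose j) + padicValNat p j.factorial
      + padicValNat p (n - j).factorial = padicValNat p n.factorial := by
    have h := congrArg (padicValNat p) (Nat.choose_mul_factorial_mul_factorial hjn)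
    have hC : n.choose j ≠ 0 := (Nat.choose_pos hjn).ne'
    rwa [padicValNat.mul (mul_ne_zero hC hfj) hfnj, padicValNat.mul hC hfj] at h
  rcases le_or_gt j z₀ with hzj | hzj
  · have hD := D1 hp hz₀p hmod j hjn hzj
    omega
  · rcases lt_or_ge j p with hjp | hpj
    · have hD2 := D2 hp hz₀p hmod j hzj hjn hjp
      have hj0 : padicValNat p j.factorial = 0 :=
        padicValNat.eq_zero_of_not_dvd (by
          rw [Nat.Prime.dvd_factorial hp]; omega)
      have hnd : padicValNat p n.factorial
          = padicValNat p n + padicValNat p (n - 1).factorial := nu_fact_step hp hn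
      have hmono : padicValNat p (n - j).factorial ≤ padicValNat p (n - 1).factorial :=
        nu_le_of_dvd hp (Nat.factorial_pos _).ne' (Nat.factorial_dvd_factorial (by omega))
      omega
    · have E5 := nu_choose_add hp n s
      have E6' := nu_choose_add hp (n - j) s
      have hrw : n - j + s = n + s - j := by omega
      rw [hrw] at E6'
      have hleg := legendre_bound hp (j := j) (by omega)
      have hkey : padicValNat p ((n + s).choose s) + padicValNat p j.factorial + 1 ≤ j := by
        obtain ⟨pp, rfl⟩ : ∃ pp, p = pp + 3 := ⟨p - 3, by omega⟩
        obtain ⟨jj, hjeq⟩ : ∃ jj, j = jj + pp + 3 := ⟨j - pp - 3, by omega⟩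
        set a := padicValNat (pp + 3) j.factorial with ha
        set u' := padicValNat (pp + 3) ((n + s).choose s) with hu'
        have e1 : pp + 3 - 1 = pp + 2 := by omega
        have e2 : j - 1 = jj + pp + 2 := by omega
        rw [e1, e2] at hleg
        have hub : u' ≤ pp + 1 := by omega
        have hmul : (pp + 2) * (u' + a + 1) ≤ (pp + 2) * (jj + pp + 3) := by nlinarith
        have := Nat.le_of_mul_le_mul_left hmul (by omega)
        omega
      omega

end Valuation

end G1Aux

open G1Aux

theorem g1_no_linear_factor_of_u_pos (n s : ℕ) (hn : 1 ≤ n)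
    (p : ℕ) (hp : p.Prime) (hp2 : 2 < p) (hpdvd : p ∣ n * (s + 1))
    (u : ℕ) (hu_def : u = padicValNat p ((n + s).choose s)) (hu : 0 < u)
    (z₀ : ℕ) (hz₀1 : 1 ≤ z₀) (hz₀p : z₀ < p) (hz₀ : (z₀ : ZMod p) = ((n + s : ℕ) : ZMod p))
    (h1 : ((u : ℚ) + 1) / (p : ℚ) < 1)
    (h2 : ((padicValNat p (n + s - z₀) : ℚ) - (padicValNat p n : ℚ)) / ((z₀ : ℚ) + 1) < 1) :
    ¬ ∃ q : ℚ[X], q.natDegree = 1 ∧ q ∣ g1 n s := by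
  haveI := Fact.mk hp
  rintro ⟨q, hq1, hqdvd⟩
  -- derived hypotheses
  have hmod : z₀ ≡ n + s [MOD p] := (ZMod.natCast_eq_natCast_iff _ _ _).mp hz₀
  have hu' : padicValNat p ((n + s).choose s) + 1 < p := by
    have hp0 : (0 : ℚ) < p := by exact_mod_cast hp.pos
    rw [div_lt_one hp0] at h1
    have : (u : ℚ) + 1 < p := h1
    have : u + 1 < p := by exact_mod_cast this
    omega
  have he' : padicValNat p (n + s - z₀) ≤ z₀ + padicValNat p n := by
    have hz0 : (0 : ℚ) < (z₀ : ℚ) + 1 := by positivity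
    rw [div_lt_one hz0] at h2
    have : (padicValNat p (n + s - z₀) : ℚ) < (z₀ : ℚ) + 1 + (padicValNat p n : ℚ) := by
      linarith
    have : padicValNat p (n + s - z₀) < z₀ + 1 + padicValNat p n := by exact_mod_cast this
    omega
  -- rational root
  have hq0 : q ≠ 0 := fun h => by simp [h] at hq1
  have ha : q.coeff 1 ≠ 0 := by
    have h := Polynomial.leadingCoeff_ne_zero.mpr hq0
    rwa [Polynomial.leadingCoeff, hq1] at h
  set r : ℚ := -q.coeff 0 / q.coeff 1 with hr
  have hqr : q.eval r = 0 := by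
    conv_lhs => rw [Polynomial.eq_X_add_C_of_natDegree_le_one (le_of_eq hq1)]
    simp only [Polynomial.eval_add, Polynomial.eval_mul, Polynomial.eval_C, Polynomial.eval_X, hr]
    field_simp
    ring
  have hg1r : (g1 n s).eval r = 0 := by
    obtain ⟨w, hw⟩ := hqdvd
    rw [hw, Polynomial.eval_mul, hqr, zero_mul]
  -- integer root
  have hint : IsIntegral ℤ r := by
    refine ⟨G n s, G_monic n s, ?_⟩
    rw [← Polynomial.eval_map]
    show ((G n s).map (algebraMap ℤ ℚ)).eval r = 0
    rw [algebraMap_int_eq, ← g1_eq_map]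
    exact hg1r
  obtain ⟨m, hm⟩ := IsIntegrallyClosed.isIntegral_iff.mp hint
  have hm' : (m : ℚ) = r := by exact_mod_cast hm
  have hGm : (G n s).eval m = 0 := by
    have h : (g1 n s).eval r = (((G n s).eval m : ℤ) : ℚ) := by
      rw [g1_eq_map, ← hm']
      simpa using Polynomial.eval_intCast_map (Int.castRingHom ℚ) (G n s) m
    rw [hg1r] at h
    exact_mod_cast h.symm
  rw [G_eval] at hGm
  by_cases hpm : (p : ℤ) ∣ m
  · -- p ∣ m : valuation contradiction at j = 0
    have hm0 : m ≠ 0 := by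
      rintro rfl
      rw [Finset.sum_range_succ'] at hGm
      simp only [zero_pow, Nat.succ_ne_zero, ne_eq, not_false_eq_true, mul_zero,
        Finset.sum_const_zero, zero_add, pow_zero, mul_one] at hGm
      have hA0z : A n s 0 = 0 := by exact_mod_cast hGm
      exact (A_pos s (Nat.zero_le n)).ne' hA0z
    set v0 := padicValNat p (A n s 0) with hv0
    rw [Finset.sum_range_succ'] at hGm
    have hdvd : ∀ i ∈ Finset.range n, (p : ℤ) ^ (v0 + 1) ∣ (A n s (i + 1) : ℤ) * m ^ (i + 1) := by
      intro i hi
      have hin : i + 1 ≤ n := Finset.mem_range.mp hi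
      have hB := lemmaB hn hp hp2 hz₀1 hz₀p hmod hu' he' (by omega) hin
      have hdA : (p : ℤ) ^ (padicValNat p (A n s (i + 1))) ∣ (A n s (i + 1) : ℤ) := by
        exact_mod_cast Int.natCast_dvd_natCast.mpr pow_padicValNat_dvd
      have hdm : (p : ℤ) ^ (i + 1) ∣ m ^ (i + 1) := pow_dvd_pow_of_dvd hpm _
      have hmul := mul_dvd_mul hdA hdm
      rw [← pow_add] at hmul
      exact dvd_trans (pow_dvd_pow _ (by omega)) hmul
    have hsum : (p : ℤ) ^ (v0 + 1) ∣
        ∑ i ∈ Finset.range n, (A n s (i + 1) : ℤ) * m ^ (i + 1) := Finset.dvd_sum hdvd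
    have hA0eq : (A n s 0 : ℤ) = -∑ i ∈ Finset.range n, (A n s (i + 1) : ℤ) * m ^ (i + 1) := by
      rw [pow_zero, mul_one] at hGm
      linarith
    have hA0d : (p : ℤ) ^ (v0 + 1) ∣ (A n s 0 : ℤ) := by
      rw [hA0eq]; exact dvd_neg.mpr hsum
    have hA0d' : (p ^ (v0 + 1) : ℕ) ∣ A n s 0 := by exact_mod_cast hA0d
    have := (padicValNat_dvd_iff_le (A_pos s (Nat.zero_le n)).ne').mp hA0d'
    omega
  · -- p ∤ m : reduction mod p
    have hmod0 : ((∑ j ∈ Finset.range (n + 1), (A n s j : ℤ) * m ^ j : ℤ) : ZMod p) = 0 := by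
      rw [hGm]; simp
    push_cast at hmod0
    rw [Finset.sum_range_succ] at hmod0
    have hz : ∀ j ∈ Finset.range n, ((A n s j : ℕ) : ZMod p) * (m : ZMod p) ^ j = 0 := by
      intro j hj
      have h0 : ((A n s j : ℕ) : ZMod p) = 0 :=
        (ZMod.natCast_eq_zero_iff _ _).mpr (A_dvd hp hn hpdvd (Finset.mem_range.mp hj))
      rw [h0, zero_mul]
    rw [Finset.sum_eq_zero hz, zero_add, A_last] at hmod0
    have hmzero : (m : ZMod p) = 0 := by
      have hn0 : n ≠ 0 := by omega
      have : (m : ZMod p) ^ n = 0 := by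
        rw [← hmod0]; push_cast; ring
      exact pow_eq_zero_iff hn0 |>.mp this
    exact hpm ((ZMod.intCast_zmod_eq_zero_iff_dvd m p).mp hmzero)
end

section
/- Let p be a prime, D a positive integer with gcd(D,p) = 1, and set n = pD. Let s be a non-negative integer written as s = p·s₁ + s₀ with 0 ≤ s₀ < p and 0 ≤ s₁ < p. Then ν_p(C(n+s, s)) = ν_p(C(D+s₁, s₁)). -/
lemma dsum_aux (p a b : ℕ) (hp : 1 < p) (hb : b < p) :
    (p.digits (p * a + b)).sum = b + (p.digits a).sum := by
  rcases Nat.eq_zero_or_pos (p * a + b) with h | h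
  · have ha : a = 0 := by nlinarith
    have hb0 : b = 0 := by omega
    simp [ha, hb0]
  · rw [Nat.digits_def' hp h]
    have h1 : (p * a + b) % p = b := by
      rw [Nat.mul_add_mod, Nat.mod_eq_of_lt hb]
    have h2 : (p * a + b) / p = a := by
      rw [Nat.mul_add_div (by omega), Nat.div_eq_of_lt hb]; omega
    simp [h1, h2]

theorem padicValNat_choose_reduction (p : ℕ) (hp : p.Prime)
    (D : ℕ) (hD : 0 < D) (hDp : Nat.gcd D p = 1)
    (n : ℕ) (hn : n = p * D)
    (s s₀ s₁ : ℕ) (hs : s = p * s₁ + s₀) (hs₀ : s₀ < p) (hs₁ : s₁ < p) :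
    padicValNat p ((n + s).choose s) = padicValNat p ((D + s₁).choose s₁) := by
  haveI : Fact p.Prime := ⟨hp⟩
  have hp1 : 1 < p := hp.one_lt
  have h1 : (p - 1) * padicValNat p ((n + s).choose s) =
      (p.digits s).sum + (p.digits n).sum - (p.digits (n + s)).sum :=
    sub_one_mul_padicValNat_choose_eq_sub_sum_digits'
  have h2 : (p - 1) * padicValNat p ((D + s₁).choose s₁) =
      (p.digits s₁).sum + (p.digits D).sum - (p.digits (D + s₁)).sum :=
    sub_one_mul_padicValNat_choose_eq_sub_sum_digits'
  have hns : n + s = p * (D + s₁) + s₀ := by rw [hn, hs]; ring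
  have e1 : (p.digits s).sum = s₀ + (p.digits s₁).sum := by
    rw [hs]; exact dsum_aux p s₁ s₀ hp1 hs₀
  have e2 : (p.digits n).sum = (p.digits D).sum := by
    have := dsum_aux p D 0 hp1 (by omega)
    rw [hn]; simpa using this
  have e3 : (p.digits (n + s)).sum = s₀ + (p.digits (D + s₁)).sum := by
    rw [hns]; exact dsum_aux p (D + s₁) s₀ hp1 hs₀
  have key : (p - 1) * padicValNat p ((n + s).choose s) =
      (p - 1) * padicValNat p ((D + s₁).choose s₁) := by
    rw [h1, h2, e1, e2, e3]; omega
  exact Nat.eq_of_mul_eq_mul_left (by omega) key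
end

section
/- Let n be a positive integer and s a non-negative integer with n < s+2, and suppose there exists a prime p with (n+s)/2 < p ≤ n. If g₁(x) = g₁(x,n,s) is the product of a polynomial of degree 1 and an irreducible polynomial in ℚ[x], then g₁(x) is irreducible over ℚ. -/
open Polynomial Finset

/-- Integer version of `g1 n (n-1)`. -/
noncomputable def Gaux (n : ℕ) : ℤ[X] :=
  ∑ j ∈ Finset.range (n + 1),
    Polynomial.C ((n.factorial / j.factorial * ((2 * n - 1 - j).choose (n - j)) : ℕ) : ℤ) *
      Polynomial.X ^ j

lemma coeff_Gaux (n k : ℕ) :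
    (Gaux n).coeff k =
      if k ≤ n then ((n.factorial / k.factorial * ((2 * n - 1 - k).choose (n - k)) : ℕ) : ℤ)
      else 0 := by
  unfold Gaux
  rw [Polynomial.finset_sum_coeff]
  simp only [Polynomial.coeff_C_mul, Polynomial.coeff_X_pow, mul_ite, mul_one, mul_zero]
  rw [Finset.sum_ite_eq (Finset.range (n + 1)) k]
  simp [Nat.lt_succ_iff]

lemma coeff_Gaux_top (n : ℕ) : (Gaux n).coeff n = 1 := by
  rw [coeff_Gaux]
  simp [Nat.div_self n.factorial_pos]

lemma natDegree_Gaux (n : ℕ) : (Gaux n).natDegree = n := by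
  apply le_antisymm
  · apply Polynomial.natDegree_le_iff_coeff_eq_zero.2
    intro k hk
    rw [coeff_Gaux]
    simp [Nat.not_le.2 hk, Nat.le_of_lt_succ]
  · apply Polynomial.le_natDegree_of_ne_zero
    rw [coeff_Gaux_top]; exact one_ne_zero

lemma monic_Gaux (n : ℕ) : (Gaux n).Monic := by
  unfold Polynomial.Monic Polynomial.leadingCoeff
  rw [natDegree_Gaux, coeff_Gaux_top]

lemma g1_eq_map (n : ℕ) (hn : 1 ≤ n) :
    g1 n (n - 1) = (Gaux n).map (Int.castRingHom ℚ) := by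
  unfold g1 Gaux
  rw [Polynomial.map_sum, Finset.mul_sum]
  refine Finset.sum_congr rfl ?_
  intro j hj
  rw [Finset.mem_range, Nat.lt_succ_iff] at hj
  rw [Polynomial.map_mul, Polynomial.map_pow, Polynomial.map_X, Polynomial.map_C]
  have hnn : n + (n - 1) - j = 2 * n - 1 - j := by omega
  rw [hnn, ← Polynomial.C_eq_natCast, ← mul_assoc, ← Polynomial.C_mul]
  congr 1
  rw [eq_intCast, Int.cast_natCast, Nat.cast_mul, Nat.cast_div (Nat.factorial_dvd_factorial hj)
    (by exact_mod_cast j.factorial_ne_zero)]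
  ring

lemma not_sq_dvd (n : ℕ) (hp : n.Prime) :
    ¬ (n ^ 2 ∣ n.factorial * (2 * n - 1).choose n) := by
  have h2 : 2 ≤ n := hp.two_le
  -- (2n-1)! = n! * P where P = ∏ i in Ico (n+1) (2n)
  set P : ℕ := ∏ i ∈ Finset.Ico (n + 1) (2 * n), i with hP
  have hfac : (2 * n - 1).factorial = n.factorial * P := by
    have h2n : 2 * n - 1 + 1 = 2 * n := by omega
    rw [← Finset.prod_Ico_id_eq_factorial, hP, h2n,
      ← Finset.prod_Ico_consecutive _ (by omega : 1 ≤ n + 1) (by omega : n + 1 ≤ 2 * n),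
      Finset.prod_Ico_id_eq_factorial]
  have hchoose : (2 * n - 1).choose n * n.factorial * (n - 1).factorial
      = (2 * n - 1).factorial := by
    have := Nat.choose_mul_factorial_mul_factorial (show n ≤ 2 * n - 1 by omega)
    rwa [show 2 * n - 1 - n = n - 1 by omega] at this
  -- hence n! * choose = n * P
  have key : n.factorial * (2 * n - 1).choose n = n * P := by
    have h1 : ((2 * n - 1).choose n * n.factorial) * (n - 1).factorial
        = (n * P) * (n - 1).factorial := by
      have hfn : n.factorial = n * (n - 1).factorial := by
        conv_lhs => rw [show n = n - 1 + 1 by omega]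
        rw [Nat.factorial_succ]
        congr 1
        omega
      rw [hchoose, hfac, hfn]; ring
    have := Nat.eq_of_mul_eq_mul_right (Nat.factorial_pos (n - 1)) h1
    rw [mul_comm] at this
    exact this
  rw [key]
  intro hdvd
  have hnP : n ∣ P := by
    have hn0 : 0 < n := by omega
    rcases hdvd with ⟨c, hc⟩
    have : n * P = n * (n * c) := by rw [hc]; ring
    have hPc : P = n * c := Nat.eq_of_mul_eq_mul_left hn0 this
    exact ⟨c, hPc⟩
  have := (Nat.Prime.prime hp).dvd_finset_prod_iff id |>.1 hnP
  obtain ⟨i, hi, hdi⟩ := this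
  rw [Finset.mem_Ico] at hi
  obtain ⟨m, rfl⟩ := hdi
  rcases hi with ⟨h1', h2'⟩
  have : 2 ≤ m := by nlinarith
  nlinarith

lemma irreducible_Gaux (n : ℕ) (hp : n.Prime) : Irreducible (Gaux n) := by
  have hprimeZ : Prime (n : ℤ) := Nat.prime_iff_prime_int.mp hp
  have hI : (Ideal.span {(n : ℤ)}).IsPrime := by
    rw [Ideal.span_singleton_prime (by exact_mod_cast hp.ne_zero)]
    exact hprimeZ
  refine Polynomial.IsEisensteinAt.irreducible (𝓟 := Ideal.span {(n : ℤ)}) ?_ hI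
    (monic_Gaux n).isPrimitive (by rw [natDegree_Gaux]; exact hp.pos)
  constructor
  · rw [(monic_Gaux n).leadingCoeff, Ideal.mem_span_singleton]
    exact hprimeZ.not_dvd_one
  · intro k hk
    rw [natDegree_Gaux] at hk
    rw [coeff_Gaux, if_pos hk.le, Ideal.mem_span_singleton]
    have h2 : 2 ≤ n := hp.two_le
    have hfn : n.factorial = n * (n - 1).factorial := by
      conv_lhs => rw [show n = n - 1 + 1 by omega]
      rw [Nat.factorial_succ]
      congr 1
      omega
    have hdvd : n ∣ n.factorial / k.factorial * ((2 * n - 1 - k).choose (n - k)) := by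
      refine Dvd.dvd.mul_right ?_ _
      have : n.factorial / k.factorial = n * ((n - 1).factorial / k.factorial) := by
        rw [hfn, Nat.mul_div_assoc n (Nat.factorial_dvd_factorial (by omega : k ≤ n - 1))]
      rw [this]
      exact Dvd.intro _ rfl
    exact_mod_cast Int.natCast_dvd_natCast.2 hdvd
  · rw [coeff_Gaux, if_pos (Nat.zero_le n), Ideal.span_singleton_pow,
      Ideal.mem_span_singleton]
    simp only [Nat.sub_zero, Nat.factorial_zero, Nat.div_one]
    intro hdvd
    exact not_sq_dvd n hp (by exact_mod_cast hdvd)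

theorem g1_irreducible_of_prime_in_range (n s : ℕ) (hn : 1 ≤ n) (hns : n < s + 2)
    (hprime : ∃ p : ℕ, p.Prime ∧ ((n : ℚ) + (s : ℚ)) / 2 < (p : ℚ) ∧ p ≤ n)
    (hfac : ∃ l q : ℚ[X], l.natDegree = 1 ∧ Irreducible q ∧ g1 n s = l * q) :
    Irreducible (g1 n s) := by
  obtain ⟨p, hpp, hlt, hle⟩ := hprime
  have hns' : n + s < 2 * p := by
    have : (n : ℚ) + (s : ℚ) < 2 * p := by linarith
    exact_mod_cast this
  have hpn : n = p := by omega
  subst hpn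
  have hs : s = n - 1 := by omega
  subst hs
  rw [g1_eq_map n hn]
  rw [show (Int.castRingHom ℚ) = algebraMap ℤ ℚ from rfl]
  exact ((monic_Gaux n).irreducible_iff_irreducible_map_fraction_map (K := ℚ)).1
    (irreducible_Gaux n hpp)
end
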